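/- arXiv:1905.09212 — 7 statements merged into one kernel-verified Lean document; each statement's English description precedes it below -/
import Mathlib

section
/- Let p be a prime, α a positive integer, and n = p^r · n₀ with r a nonnegative integer and n₀ an integer not divisible by p. Then: C(p^α, p^r n₀) = p^⌊α/2⌋ if r ≥ α; C(p^α, p^r n₀) = p^{r/2} · C(p^{α−r}, n₀) if r < α and r is even; and C(p^α, p^r n₀) = 0 if r < α and r is odd. -/
open Finset

/-- `C m n` is the number of residues `x` modulo `m` with `x² ≡ n (mod m)`. -/
noncomputable def C (m : ℕ) (n : ℤ) : ℕ := Nat.card {x : ZMod m // x ^ 2 = (n : ZMod m)}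

lemma C_eq (m : ℕ) (hm : 0 < m) (n : ℤ) :
    C m n = ((range m).filter (fun x : ℕ => (m:ℤ) ∣ (x:ℤ)^2 - n)).card := by
  classical
  haveI : NeZero m := ⟨hm.ne'⟩
  rw [C, Nat.card_eq_fintype_card, Fintype.card_subtype]
  apply Finset.card_nbij' (fun x => ZMod.val x) (fun x => ((x : ℕ) : ZMod m))
  · intro x hx
    simp only [mem_coe, mem_filter, mem_univ, true_and] at hx
    simp only [mem_coe, mem_filter, mem_range]
    refine ⟨ZMod.val_lt x, ?_⟩
    have h1 : (((x.val : ℤ)^2 - n : ℤ) : ZMod m) = 0 := by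
      push_cast
      rw [ZMod.natCast_val, ZMod.cast_id, hx]
      ring
    exact (ZMod.intCast_zmod_eq_zero_iff_dvd _ m).mp h1
  · intro x hx
    simp only [mem_coe, mem_filter, mem_range] at hx
    simp only [mem_coe, mem_filter, mem_univ, true_and]
    have h1 := (ZMod.intCast_zmod_eq_zero_iff_dvd ((x:ℤ)^2 - n) m).mpr hx.2
    push_cast at h1
    linear_combination h1
  · intro x _
    simp [ZMod.natCast_val, ZMod.cast_id]
  · intro x hx
    simp only [mem_coe, mem_filter, mem_range] at hx
    exact ZMod.val_natCast_of_lt hx.1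

lemma count_step (m : ℕ) (P : ℕ → Prop) [DecidablePred P] (hP : ∀ x, P (x + m) ↔ P x) (k : ℕ) :
    ((range (m*k)).filter P).card = k * ((range m).filter P).card := by
  induction k with
  | zero => simp
  | succ k ih =>
    have hper : ∀ x, P (m * k + x) ↔ P x := by
      intro x
      clear ih
      induction k with
      | zero => simp
      | succ j ihj =>
        have h2 : m * (j+1) + x = (m * j + x) + m := by ring
        rw [h2, hP, ihj]
    have h1 : m * (k+1) = m*k + m := by ring
    rw [h1, Finset.range_add, filter_union, card_union_of_disjoint, ih]
    · rw [Finset.filter_map, Finset.card_map]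
      have : (range m).filter (P ∘ (addLeftEmbedding (m*k))) = (range m).filter P := by
        apply filter_congr
        intro x _
        simp only [Function.comp, addLeftEmbedding_apply]
        exact hper x
      rw [this]; ring
    · apply Finset.disjoint_left.mpr
      intro a ha hb
      rw [mem_filter, mem_range] at ha
      rw [mem_filter, mem_map] at hb
      obtain ⟨⟨b, _, hb⟩, -⟩ := hb
      rw [addLeftEmbedding_apply] at hb
      omega

lemma count_multiples (d k : ℕ) (hd : 0 < d) :
    ((range (d*k)).filter (fun x => d ∣ x)).card = k := by
  classical
  rw [count_step d _ (fun x => by simp [Nat.dvd_add_self_right]) k]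
  have : (range d).filter (fun x => d ∣ x) = {0} := by
    ext x
    simp only [mem_filter, mem_range, mem_singleton]
    constructor
    · rintro ⟨h1, h2⟩
      exact Nat.eq_zero_of_dvd_of_lt h2 h1
    · rintro rfl; exact ⟨hd, dvd_zero d⟩
  rw [this]; simp

lemma half_dvd {p : ℕ} (hp : p.Prime) (a x : ℕ) (h : p ^ a ∣ x^2) : p ^ ((a+1)/2) ∣ x := by
  rcases Nat.eq_zero_or_pos x with rfl | hx
  · exact dvd_zero _
  have hx2 : x^2 ≠ 0 := by positivity
  rw [Nat.Prime.pow_dvd_iff_le_factorization hp hx2] at h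
  rw [Nat.Prime.pow_dvd_iff_le_factorization hp hx.ne']
  rw [Nat.factorization_pow] at h
  simp only [Finsupp.smul_apply, smul_eq_mul] at h
  omega

theorem stmt_4 (p : ℕ) (hp : p.Prime) (α : ℕ) (hα : 0 < α) (r : ℕ) (n₀ : ℤ)
    (hn₀ : ¬ (p : ℤ) ∣ n₀) :
    (α ≤ r → C (p ^ α) ((p : ℤ) ^ r * n₀) = p ^ (α / 2)) ∧
    (r < α → Even r → C (p ^ α) ((p : ℤ) ^ r * n₀) = p ^ (r / 2) * C (p ^ (α - r)) n₀) ∧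
    (r < α → Odd r → C (p ^ α) ((p : ℤ) ^ r * n₀) = 0) := by
  classical
  have hp0 : 0 < p := hp.pos
  have hpz : ((p:ℤ)) ≠ 0 := by exact_mod_cast hp0.ne'
  refine ⟨?_, ?_, ?_⟩
  · -- case α ≤ r
    intro hαr
    rw [C_eq _ (pow_pos hp0 α)]
    have key : ∀ x ∈ range (p^α),
        (((p^α : ℕ):ℤ) ∣ (x:ℤ)^2 - (p:ℤ)^r * n₀ ↔ p^((α+1)/2) ∣ x) := by
      intro x _
      constructor
      · intro h
        push_cast at h
        have h2 : (p:ℤ)^α ∣ (x:ℤ)^2 := by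
          have : (p:ℤ)^α ∣ (p:ℤ)^r * n₀ := Dvd.dvd.mul_right (pow_dvd_pow _ hαr) n₀
          have := dvd_add h this
          simpa using this
        have h3 : p^α ∣ x^2 := by exact_mod_cast h2
        exact half_dvd hp α x h3
      · intro h
        have h2 : p^α ∣ x^2 := by
          have := pow_dvd_pow_of_dvd h 2
          rw [← pow_mul] at this
          exact dvd_trans (pow_dvd_pow p (by omega)) this
        push_cast
        have h3 : (p:ℤ)^α ∣ (x:ℤ)^2 := by exact_mod_cast h2
        exact dvd_sub h3 (Dvd.dvd.mul_right (pow_dvd_pow _ hαr) n₀)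
    rw [filter_congr key]
    have hsplit : p^α = p^((α+1)/2) * p^(α/2) := by
      rw [← pow_add]; congr 1; omega
    rw [hsplit, count_multiples _ _ (pow_pos hp0 _)]
  · -- case r < α, Even r
    intro hrα hre
    set s := r/2 with hs
    have hr2 : r = 2*s := by
      have := Nat.even_iff.mp hre; omega
    set m := α - r with hm
    have hm1 : α = 2*s + m := by omega
    have hm2 : α - s = m + s := by omega
    rw [C_eq _ (pow_pos hp0 α), C_eq _ (pow_pos hp0 (α - r))]
    have hps : (0:ℕ) < p^s := pow_pos hp0 s
    -- Step 1: bijection x ↦ x / p^s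
    have step1 : ((range (p^α)).filter (fun x : ℕ => ((p^α : ℕ):ℤ) ∣ (x:ℤ)^2 - (p:ℤ)^r * n₀)).card
        = ((range (p^(α-s))).filter (fun y : ℕ => ((p^(α-r) : ℕ):ℤ) ∣ (y:ℤ)^2 - n₀)).card := by
      have hdvd : ∀ x ∈ (range (p^α)).filter
          (fun x : ℕ => ((p^α : ℕ):ℤ) ∣ (x:ℤ)^2 - (p:ℤ)^r * n₀), p^s ∣ x := by
        intro x hx
        rw [mem_filter] at hx
        obtain ⟨-, h⟩ := hx
        push_cast at h
        have h2 : (p:ℤ)^r ∣ (x:ℤ)^2 := by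
          have := dvd_add (dvd_trans (pow_dvd_pow (p:ℤ) hrα.le) h)
            (Dvd.dvd.mul_right (dvd_refl ((p:ℤ)^r)) n₀)
          simpa using this
        have h3 : p^r ∣ x^2 := by exact_mod_cast h2
        have := half_dvd hp r x h3
        refine dvd_trans (pow_dvd_pow p ?_) this
        omega
      apply Finset.card_nbij' (fun x => x / p^s) (fun y => p^s * y)
      · intro x hx
        have hds := hdvd x hx
        rw [mem_coe, mem_filter] at hx ⊢
        obtain ⟨hx1, hx2⟩ := hx
        rw [mem_range] at hx1
        obtain ⟨y, rfl⟩ := hds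
        beta_reduce
        rw [Nat.mul_div_cancel_left _ hps]
        constructor
        · rw [mem_range]
          have : p^α = p^s * p^(α-s) := by rw [← pow_add]; congr 1; omega
          rw [this] at hx1
          exact Nat.lt_of_mul_lt_mul_left hx1
        · push_cast at hx2 ⊢
          have key : ((p:ℤ)^s * y)^2 - (p:ℤ)^r * n₀ = (p:ℤ)^r * ((y:ℤ)^2 - n₀) := by
            rw [hr2]; ring
          rw [key] at hx2
          have hα2 : (p:ℤ)^α = (p:ℤ)^r * (p:ℤ)^m := by rw [← pow_add]; congr 1; omega
          rw [hα2] at hx2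
          exact (mul_dvd_mul_iff_left (pow_ne_zero r hpz)).mp hx2
      · intro y hy
        rw [mem_coe, mem_filter] at hy ⊢
        obtain ⟨hy1, hy2⟩ := hy
        rw [mem_range] at hy1
        constructor
        · rw [mem_range]
          calc p^s * y < p^s * p^(α-s) := by
                exact (Nat.mul_lt_mul_left hps).mpr hy1
               _ = p^α := by rw [← pow_add]; congr 1; omega
        · push_cast at hy2 ⊢
          have key : ((p:ℤ)^s * y)^2 - (p:ℤ)^r * n₀ = (p:ℤ)^r * ((y:ℤ)^2 - n₀) := by
            rw [hr2]; ring
          rw [key]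
          have hα2 : (p:ℤ)^α = (p:ℤ)^r * (p:ℤ)^m := by rw [← pow_add]; congr 1; omega
          rw [hα2]
          exact mul_dvd_mul_left _ hy2
      · intro x hx
        exact Nat.mul_div_cancel' (hdvd x hx)
      · intro y _
        exact Nat.mul_div_cancel_left _ hps
    rw [step1]
    -- Step 2: periodicity count
    have hper : ∀ y : ℕ, (((p^(α-r) : ℕ):ℤ) ∣ ((y + p^m : ℕ):ℤ)^2 - n₀) ↔
        (((p^(α-r) : ℕ):ℤ) ∣ (y:ℤ)^2 - n₀) := by
      intro y
      have e : ((y + p^m : ℕ):ℤ)^2 - n₀ = ((p^(α-r):ℕ):ℤ) * (2*(y:ℤ) + (p:ℤ)^m) + ((y:ℤ)^2 - n₀) := by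
        push_cast [hm]
        ring
      rw [e]
      exact dvd_add_right ⟨_, rfl⟩
    have hsplit : p^(α-s) = p^m * p^s := by rw [← pow_add]; congr 1
    rw [hsplit, count_step (p^m) _ hper (p^s), hm]
  · -- case r < α, Odd r
    intro hrα hro
    rw [C_eq _ (pow_pos hp0 α)]
    rw [Finset.card_eq_zero, Finset.filter_eq_empty_iff]
    intro x _
    intro h
    push_cast at h
    have h1 : (p:ℤ)^(r+1) ∣ (x:ℤ)^2 - (p:ℤ)^r * n₀ :=
      dvd_trans (pow_dvd_pow _ (by omega)) h
    have h2 : (p:ℤ)^r ∣ (x:ℤ)^2 := by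
      have := dvd_add (dvd_trans (pow_dvd_pow (p:ℤ) (Nat.le_succ r)) h1)
        (Dvd.dvd.mul_right (dvd_refl ((p:ℤ)^r)) n₀)
      simpa using this
    have h3 : p^r ∣ x^2 := by exact_mod_cast h2
    have h4 : p^((r+1)/2) ∣ x := half_dvd hp r x h3
    have h5 : (p:ℤ)^(r+1) ∣ (x:ℤ)^2 := by
      have := pow_dvd_pow_of_dvd h4 2
      rw [← pow_mul] at this
      have h6 : p^(r+1) ∣ x^2 := by
        refine dvd_trans (pow_dvd_pow p ?_) this
        obtain ⟨t, rfl⟩ := hro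
        omega
      exact_mod_cast h6
    have h7 : (p:ℤ)^(r+1) ∣ (p:ℤ)^r * n₀ := by
      have := dvd_sub h5 h1
      simpa using this
    rw [pow_succ] at h7
    have h8 : (p:ℤ) ∣ n₀ := by
      rcases h7 with ⟨c, hc⟩
      refine ⟨c, ?_⟩
      have := mul_left_cancel₀ (pow_ne_zero r hpz) (by linarith [hc] : (p:ℤ)^r * n₀ = (p:ℤ)^r * ((p:ℤ) * c))
      linarith [this]
    exact hn₀ h8
end

section
/- Let n be a positive integer and s a complex number with Re(s) > 1. Then the series Z_n(s) = Σ_{m=1}^∞ C(3m, −n)/m^s converges absolutely and factors as an Euler product: Z_n(s) = (Σ_{k=0}^∞ C(3^{k+1}, −n) · 3^{−ks}) · ∏_{p prime, p ≠ 3} (Σ_{k=0}^∞ C(p^k, −n) · p^{−ks}), where the product over primes p ≠ 3 converges (is multipliable). -/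
lemma C_one (N : ℤ) : C 1 N = 1 := by
  have : ∀ x : ZMod 1, x ^ 2 = (N : ZMod 1) := fun x => Subsingleton.elim _ _
  rw [C, Nat.card_congr (Equiv.subtypeUnivEquiv this)]
  simp [Nat.card_eq_fintype_card]

lemma C_mul {a b : ℕ} (h : Nat.Coprime a b) (N : ℤ) : C (a * b) N = C a N * C b N := by
  rw [C, C, C, ← Nat.card_prod]
  apply Nat.card_congr
  refine Equiv.trans ((ZMod.chineseRemainder h).toEquiv.subtypeEquiv fun x => ?_)
    (Equiv.subtypeProdEquivProd (p := fun x : ZMod a => x ^ 2 = (N : ZMod a))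
      (q := fun y : ZMod b => y ^ 2 = (N : ZMod b)))
  constructor
  · intro hx
    constructor
    · have := congrArg (fun z => ((ZMod.chineseRemainder h) z).1) hx
      simpa using this
    · have := congrArg (fun z => ((ZMod.chineseRemainder h) z).2) hx
      simpa using this
  · intro ⟨h1, h2⟩
    apply (ZMod.chineseRemainder h).injective
    ext <;> simp only [map_pow, map_intCast] <;> [skip; skip] <;> first | simpa using h1 | simpa using h2

lemma C_le {m : ℕ} (hm : m ≠ 0) (N : ℤ) : C m N ≤ m := by
  have : NeZero m := ⟨hm⟩
  calc C m N ≤ Nat.card (ZMod m) := Nat.card_le_card_of_injective _ Subtype.coe_injective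
  _ = m := by simp [Nat.card_eq_fintype_card, ZMod.card]

lemma fiber_card {M D : ℕ} (hM : M ≠ 0) (h : D ∣ M) (w : ZMod D) :
    Nat.card {z : ZMod M // ZMod.castHom h (ZMod D) z = w} = M / D := by
  have hD : D ≠ 0 := fun h0 => hM (by simpa [h0] using h)
  have : NeZero M := ⟨hM⟩
  have : NeZero D := ⟨hD⟩
  set φ := ZMod.castHom h (ZMod D) with hφ
  have surj : Function.Surjective φ := by
    intro w
    exact ⟨(w.val : ZMod M), by rw [map_natCast]; simp [ZMod.natCast_val, ZMod.cast_id]⟩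
  set ψ := φ.toAddMonoidHom with hψ
  obtain ⟨z₀, hz₀⟩ := surj w
  have e1 : {z : ZMod M // φ z = w} ≃ ψ.ker := by
    refine ⟨fun z => ⟨z.1 - z₀, ?_⟩, fun u => ⟨u.1 + z₀, ?_⟩, fun z => by simp, fun u => by simp⟩
    · simp [AddMonoidHom.mem_ker, hψ, map_sub, z.2, hz₀]
    · have := u.2
      simp only [AddMonoidHom.mem_ker, hψ, RingHom.toAddMonoidHom_eq_coe,
        AddMonoidHom.coe_coe] at this
      simp [map_add, this, hz₀]
  have e2 : (ZMod M ⧸ ψ.ker) ≃+ ZMod D := QuotientAddGroup.quotientKerEquivOfSurjective ψ surj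
  have hcard := AddSubgroup.card_eq_card_quotient_mul_card_addSubgroup ψ.ker
  rw [Nat.card_zmod, Nat.card_congr e2.toEquiv, Nat.card_zmod] at hcard
  rw [Nat.card_congr e1]
  exact (Nat.div_eq_of_eq_mul_right (Nat.pos_of_ne_zero hD) hcard).symm

lemma int_pow_dvd_of_mul {p : ℕ} (hp : p.Prime) {k m : ℕ} {u v : ℤ}
    (h : (p : ℤ) ^ k ∣ u * v) (hv : ¬ (p : ℤ) ^ (m + 1) ∣ v) : (p : ℤ) ^ (k - m) ∣ u := by
  rcases eq_or_ne u 0 with rfl | hu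
  · simp
  have hv0 : v ≠ 0 := by rintro rfl; exact hv (dvd_zero _)
  have h' : p ^ k ∣ u.natAbs * v.natAbs := by
    rw [← Int.natAbs_mul]
    exact Int.natCast_dvd_natCast.mp (by simpa using (Int.dvd_natAbs.mpr h))
  have hfv : v.natAbs.factorization p ≤ m := by
    by_contra hc
    push_neg at hc
    exact hv (by
      have : (p : ℤ) ^ (m+1) ∣ (v.natAbs : ℤ) := by
        exact_mod_cast Int.natCast_dvd_natCast.mpr
          ((Nat.Prime.pow_dvd_iff_le_factorization hp (Int.natAbs_ne_zero.mpr hv0)).mpr hc)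
      exact (Int.dvd_natAbs.mp (by exact_mod_cast this)))
  have hmul0 : u.natAbs * v.natAbs ≠ 0 :=
    Nat.mul_ne_zero (Int.natAbs_ne_zero.mpr hu) (Int.natAbs_ne_zero.mpr hv0)
  have hk : k ≤ (u.natAbs * v.natAbs).factorization p :=
    (Nat.Prime.pow_dvd_iff_le_factorization hp hmul0).mp h'
  rw [Nat.factorization_mul (Int.natAbs_ne_zero.mpr hu) (Int.natAbs_ne_zero.mpr hv0)] at hk
  have : k - m ≤ u.natAbs.factorization p := by
    simp only [Finsupp.add_apply] at hk
    omega
  have := (Nat.Prime.pow_dvd_iff_le_factorization hp (Int.natAbs_ne_zero.mpr hu)).mpr this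
  exact Int.dvd_natAbs.mp (by exact_mod_cast this)


lemma C_pow_le (n : ℕ) (hn : 0 < n) {p : ℕ} (hp : p.Prime) (k : ℕ) :
    C (p ^ k) (-(n : ℤ)) ≤ 32 * n := by
  classical
  set N : ℤ := -(n : ℤ) with hN
  set t : ℕ := if p = 2 then 1 else 0 with ht
  have hpt2 : ¬ p ^ (t + 1) ∣ 2 := by
    rcases eq_or_ne p 2 with rfl | hne
    · simp [ht]
    · simp only [ht, if_neg hne]
      intro hdvd
      rw [zero_add, pow_one] at hdvd
      exact hne ((Nat.prime_dvd_prime_iff_eq hp Nat.prime_two).mp hdvd)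
  have hpt4 : p ^ (2 * t) ≤ 4 := by
    rcases eq_or_ne p 2 with rfl | hne
    · simp [ht]
    · simp [ht, if_neg hne]
  have h4n : 4 * n ≠ 0 := by positivity
  set c : ℕ := (4 * n).factorization p with hc
  have hpc : p ^ c ∣ 4 * n := Nat.ordProj_dvd _ p
  have hpcle : p ^ c ≤ 4 * n := Nat.le_of_dvd (by positivity) hpc
  have hpk0 : (p : ℕ) ^ k ≠ 0 := pow_ne_zero _ hp.pos.ne'
  have : NeZero (p ^ k) := ⟨hpk0⟩
  rcases le_or_gt k (c + 2 * t) with hk | hk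
  · -- small k : trivial bound
    calc C (p ^ k) N ≤ p ^ k := C_le hpk0 N
    _ ≤ p ^ c * p ^ (2 * t) := by rw [← pow_add]; exact Nat.pow_le_pow_right hp.pos hk
    _ ≤ (4 * n) * 4 := Nat.mul_le_mul hpcle hpt4
    _ ≤ 32 * n := by omega
  · -- large k
    rcases isEmpty_or_nonempty {x : ZMod (p ^ k) // x ^ 2 = (N : ZMod (p ^ k))} with he | hne
    · rw [C, Nat.card_of_isEmpty]; positivity
    obtain ⟨x, hx⟩ := hne.some
    -- integer facts
    have sol : ∀ z : ZMod (p ^ k), z ^ 2 = (N : ZMod (p ^ k)) →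
        ((p : ℤ)) ^ k ∣ ((2 * z.val : ℕ) : ℤ) ^ 2 + 4 * n := by
      intro z hz
      have : (((z.val ^ 2 + n : ℕ) : ℤ) : ZMod (p ^ k)) = 0 := by
        push_cast
        rw [ZMod.natCast_val, ZMod.cast_id, hz, hN]
        push_cast
        ring
      rw [ZMod.intCast_zmod_eq_zero_iff_dvd] at this
      push_cast at this ⊢
      have h4 : ((p : ℤ)) ^ k ∣ 4 * ((z.val : ℤ) ^ 2 + n) := Dvd.dvd.mul_left this 4
      convert h4 using 1
      ring
    set A : ℕ := 2 * x.val with hA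
    have hAsol : ((p : ℤ)) ^ k ∣ (A : ℤ) ^ 2 + 4 * n := sol x hx
    have hck : c < k := by omega
    have hcA2 : p ^ c ∣ A ^ 2 := by
      have h1 : ((p : ℤ)) ^ c ∣ (A : ℤ) ^ 2 + 4 * n :=
        dvd_trans (pow_dvd_pow _ hck.le) hAsol
      have h2 : ((p : ℤ)) ^ c ∣ ((4 * n : ℕ) : ℤ) := by exact_mod_cast hpc
      have : ((p : ℤ)) ^ c ∣ (A : ℤ) ^ 2 := by
        have := Int.dvd_sub h1 h2
        push_cast at this ⊢
        convert this using 1; ring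
      exact_mod_cast Int.natCast_dvd_natCast.mp (by exact_mod_cast this)
    have hnotc1 : ¬ p ^ (c + 1) ∣ A ^ 2 := by
      intro hdvd
      have h1 : ((p : ℤ)) ^ (c+1) ∣ (A : ℤ) ^ 2 + 4 * n :=
        dvd_trans (pow_dvd_pow _ (by omega)) hAsol
      have h2 : ((p : ℤ)) ^ (c+1) ∣ (A : ℤ) ^ 2 := by exact_mod_cast hdvd
      have h3 : ((p : ℤ)) ^ (c+1) ∣ (4 * n : ℤ) := by
        have := dvd_sub h1 h2
        simpa using this
      have h4 : p ^ (c + 1) ∣ 4 * n := by exact_mod_cast Int.natCast_dvd_natCast.mp (by exact_mod_cast h3)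
      exact Nat.pow_succ_factorization_not_dvd h4n hp h4
    have hA0 : A ≠ 0 := by
      rintro h0
      exact hnotc1 (by rw [h0]; simp)
    set va : ℕ := A.factorization p with hva
    have hva2 : 2 * va = c := by
      have hA20 : A ^ 2 ≠ 0 := pow_ne_zero _ hA0
      have h1 : c ≤ (A ^ 2).factorization p :=
        (Nat.Prime.pow_dvd_iff_le_factorization hp hA20).mp hcA2
      have h2 : ¬ (c + 1 ≤ (A ^ 2).factorization p) :=
        fun hcc => hnotc1 ((Nat.Prime.pow_dvd_iff_le_factorization hp hA20).mpr hcc)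
      have h3 : (A ^ 2).factorization p = 2 * va := by
        rw [Nat.factorization_pow]; simp [hva, mul_comm]
      omega
    have hvac : va ≤ c := by omega
    have hnot2A : ¬ ((p : ℤ)) ^ (va + t + 1) ∣ (2 * A : ℤ) := by
      intro hdvd
      have : p ^ (va + t + 1) ∣ 2 * A := by exact_mod_cast Int.natCast_dvd_natCast.mp (by exact_mod_cast hdvd)
      have h2A0 : 2 * A ≠ 0 := by omega
      have hfle : (2 * A).factorization p = t + va := by
        rw [Nat.factorization_mul (by norm_num) hA0]
        have h2f : (2 : ℕ).factorization p = t := by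
          rcases eq_or_ne p 2 with rfl | hne
          · simp [ht, Nat.Prime.factorization_self Nat.prime_two]
          · simp only [ht, if_neg hne]
            exact Nat.factorization_eq_zero_of_not_dvd
              (fun hdvd => hne ((Nat.prime_dvd_prime_iff_eq hp Nat.prime_two).mp hdvd))
        simp [h2f, hva]
      have := (Nat.Prime.pow_dvd_iff_le_factorization hp h2A0).mp this
      omega
    -- now the two-classes claim
    have hDle : va + 2 * t ≤ k := by omega
    set D : ℕ := k - (va + 2 * t) with hD
    have hDdvd : p ^ D ∣ p ^ k := pow_dvd_pow _ (by omega)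
    set φ := ZMod.castHom hDdvd (ZMod (p ^ D)) with hφ
    have key : ∀ z : ZMod (p ^ k), z ^ 2 = (N : ZMod (p ^ k)) →
        φ z = φ x ∨ φ z = - φ x := by
      intro z hz
      set B : ℕ := 2 * z.val with hB
      have hBsol : ((p : ℤ)) ^ k ∣ (B : ℤ) ^ 2 + 4 * n := sol z hz
      have hprod : ((p : ℤ)) ^ k ∣ ((B : ℤ) - A) * ((B : ℤ) + A) := by
        have := Int.dvd_sub hBsol hAsol
        convert this using 1; ring
      have hstep : ((p : ℤ)) ^ (k - (va + t)) ∣ ((B : ℤ) - A) ∨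
          ((p : ℤ)) ^ (k - (va + t)) ∣ ((B : ℤ) + A) := by
        by_cases hca : ((p : ℤ)) ^ (va + t + 1) ∣ ((B : ℤ) + A)
        · right
          have hnot : ¬ ((p : ℤ)) ^ (va + t + 1) ∣ ((B : ℤ) - A) := by
            intro h2
            apply hnot2A
            have h3 := Int.dvd_sub hca h2
            convert h3 using 1
            push_cast
            ring
          exact int_pow_dvd_of_mul hp (by rwa [mul_comm] at hprod) hnot
        · left
          exact int_pow_dvd_of_mul hp hprod hca
      have cast_eq : ∀ w : ZMod (p ^ k), ((w.val : ℕ) : ZMod (p ^ D)) = φ w := by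
        intro w
        rw [hφ, ZMod.castHom_apply, ZMod.natCast_val]
      have hexp : (k - (va + t)) - t = D := by omega
      have hpt2' : ¬ ((p : ℤ)) ^ (t + 1) ∣ (2 : ℤ) := by exact_mod_cast hpt2
      rcases hstep with hst | hst
      · left
        have h2 : ((p : ℤ)) ^ D ∣ ((z.val : ℤ) - (x.val : ℤ)) := by
          rw [← hexp]
          refine int_pow_dvd_of_mul hp (v := 2) ?_ hpt2'
          convert hst using 1
          push_cast [hB, hA]
          ring
        have h3 : ((((z.val : ℤ) - (x.val : ℤ)) : ℤ) : ZMod (p ^ D)) = 0 := by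
          rw [ZMod.intCast_zmod_eq_zero_iff_dvd]
          exact_mod_cast h2
        push_cast at h3
        rw [cast_eq z, cast_eq x] at h3
        exact sub_eq_zero.mp h3
      · right
        have h2 : ((p : ℤ)) ^ D ∣ ((z.val : ℤ) + (x.val : ℤ)) := by
          rw [← hexp]
          refine int_pow_dvd_of_mul hp (v := 2) ?_ hpt2'
          convert hst using 1
          push_cast [hB, hA]
          ring
        have h3 : ((((z.val : ℤ) + (x.val : ℤ)) : ℤ) : ZMod (p ^ D)) = 0 := by
          rw [ZMod.intCast_zmod_eq_zero_iff_dvd]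
          exact_mod_cast h2
        push_cast at h3
        rw [cast_eq z, cast_eq x] at h3
        linear_combination h3
    -- counting
    have hsub : {z : ZMod (p ^ k) | z ^ 2 = (N : ZMod (p ^ k))} ⊆
        (⇑φ ⁻¹' {φ x}) ∪ (⇑φ ⁻¹' {-φ x}) := by
      intro z hz
      rcases key z hz with h | h
      · exact Or.inl h
      · exact Or.inr h
    have hpD0 : (p : ℕ) ^ D ≠ 0 := pow_ne_zero _ hp.pos.ne'
    have fib : ∀ w : ZMod (p ^ D), Set.ncard (⇑φ ⁻¹' {w}) = p ^ (va + 2 * t) := by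
      intro w
      have : Set.ncard (⇑φ ⁻¹' {w}) = Nat.card {z : ZMod (p ^ k) // φ z = w} := by
        rw [Set.ncard_eq_toFinset_card']
        rw [Set.toFinset_card]
        rw [← Nat.card_eq_fintype_card]
        apply Nat.card_congr
        exact Equiv.refl _
      rw [this, fiber_card hpk0 hDdvd w, Nat.pow_div (by omega) hp.pos]
      congr 1
      omega
    have hCeq : C (p ^ k) N = Set.ncard {z : ZMod (p ^ k) | z ^ 2 = (N : ZMod (p ^ k))} := rfl
    calc C (p ^ k) N
        ≤ Set.ncard ((⇑φ ⁻¹' {φ x}) ∪ (⇑φ ⁻¹' {-φ x})) := by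
          rw [hCeq]
          exact Set.ncard_le_ncard hsub (Set.toFinite _)
      _ ≤ Set.ncard (⇑φ ⁻¹' {φ x}) + Set.ncard (⇑φ ⁻¹' {-φ x}) := Set.ncard_union_le _ _
      _ = 2 * (p ^ va * p ^ (2 * t)) := by rw [fib, fib, ← pow_add]; ring
      _ ≤ 2 * ((4 * n) * 4) := by
          have h1 : p ^ va ≤ 4 * n := le_trans (Nat.pow_le_pow_right hp.pos hvac) hpcle
          exact Nat.mul_le_mul_left _ (Nat.mul_le_mul h1 hpt4)
      _ ≤ 32 * n := by omega
section Analytic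

variable (n : ℕ) (s : ℂ)

/-- The basic multiplicative function. -/
noncomputable def ff (m : ℕ) : ℂ := (C m (-(n : ℤ)) : ℂ) / (m : ℂ) ^ s

variable {n s}

lemma ff_zero (hs : 1 < s.re) : ff n s 0 = 0 := by
  have : s ≠ 0 := fun h => by rw [h] at hs; simp at hs; linarith
  simp [ff, Complex.zero_cpow this]

lemma ff_one : ff n s 1 = 1 := by
  simp [ff, C_one]

lemma ff_mul {a b : ℕ} (h : Nat.Coprime a b) : ff n s (a * b) = ff n s a * ff n s b := by
  unfold ff
  rw [C_mul h]
  have hcpow : ((a * b : ℕ) : ℂ) ^ s = ((a : ℕ) : ℂ) ^ s * ((b : ℕ) : ℂ) ^ s := by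
    have := Complex.mul_cpow_ofReal_nonneg (Nat.cast_nonneg a) (Nat.cast_nonneg b) s
    push_cast at this ⊢
    exact this
  rw [hcpow]
  push_cast
  rw [div_mul_div_comm]

lemma norm_ff {m : ℕ} (hm : m ≠ 0) : ‖ff n s m‖ = (C m (-(n : ℤ)) : ℝ) / (m : ℝ) ^ s.re := by
  have hm0 : (0 : ℝ) < (m : ℝ) := by positivity
  rw [ff, norm_div, Complex.norm_natCast]
  congr 1
  rw [show ((m : ℕ) : ℂ) = (((m : ℕ) : ℝ) : ℂ) by push_cast; rfl]
  rw [Complex.norm_cpow_eq_rpow_re_of_pos hm0]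

lemma norm_ff_le (hn : 0 < n) (hs : 1 < s.re) {p : ℕ} (hp : p.Prime) (k : ℕ) :
    ‖ff n s (p ^ k)‖ ≤ (32 * n : ℝ) * ((p : ℝ) ^ (-s.re)) ^ k := by
  have hp0 : (0 : ℝ) < (p : ℝ) := by exact_mod_cast hp.pos
  have hpk : (p : ℕ) ^ k ≠ 0 := pow_ne_zero _ hp.pos.ne'
  rw [norm_ff hpk]
  have hcast : (((p ^ k : ℕ) : ℝ)) ^ s.re = ((p : ℝ) ^ s.re) ^ k := by
    push_cast
    rw [← Real.rpow_natCast ((p:ℝ) ^ s.re) k, ← Real.rpow_natCast (p:ℝ) k,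
      ← Real.rpow_mul hp0.le, ← Real.rpow_mul hp0.le, mul_comm]
  rw [hcast]
  have hrpos : (0 : ℝ) < ((p : ℝ) ^ s.re) ^ k := by positivity
  rw [div_le_iff₀ hrpos]
  have hr : ((p : ℝ) ^ (-s.re)) ^ k * ((p : ℝ) ^ s.re) ^ k = 1 := by
    rw [← mul_pow, ← Real.rpow_add hp0, neg_add_cancel, Real.rpow_zero, one_pow]
  calc (C (p ^ k) (-(n : ℤ)) : ℝ) ≤ (32 * n : ℝ) := by exact_mod_cast C_pow_le n hn hp k
  _ = (32 * n : ℝ) * (((p : ℝ) ^ (-s.re)) ^ k * ((p : ℝ) ^ s.re) ^ k) := by rw [hr, mul_one]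
  _ = (32 * n : ℝ) * ((p : ℝ) ^ (-s.re)) ^ k * ((p : ℝ) ^ s.re) ^ k := by ring

lemma r_lt_one (hs : 1 < s.re) {p : ℕ} (hp : p.Prime) : (p : ℝ) ^ (-s.re) < 1 :=
  Real.rpow_lt_one_of_one_lt_of_neg (by exact_mod_cast hp.one_lt) (by linarith)

lemma r_le_half (hs : 1 < s.re) {p : ℕ} (hp : p.Prime) : (p : ℝ) ^ (-s.re) ≤ 1 / 2 := by
  have h2 : (2 : ℝ) ≤ (p : ℝ) := by exact_mod_cast hp.two_le
  calc (p : ℝ) ^ (-s.re) ≤ (p : ℝ) ^ (-1 : ℝ) :=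
        Real.rpow_le_rpow_of_exponent_le (by linarith) (by linarith)
  _ = 1 / (p : ℝ) := by rw [Real.rpow_neg_one]; rw [one_div]
  _ ≤ 1 / 2 := by apply one_div_le_one_div_of_le <;> linarith

lemma summable_norm_ff_pow (hn : 0 < n) (hs : 1 < s.re) {p : ℕ} (hp : p.Prime) :
    Summable (fun k : ℕ => ‖ff n s (p ^ k)‖) := by
  apply Summable.of_nonneg_of_le (fun k => norm_nonneg _) (norm_ff_le hn hs hp)
  exact (summable_geometric_of_lt_one (by positivity) (r_lt_one hs hp)).mul_left _

end Analytic
section Summability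

variable {n : ℕ} {s : ℂ}

noncomputable def RR (n : ℕ) (s : ℂ) (q : ℕ) : ℝ :=
  if q.Prime then ∑' k : ℕ, ‖ff n s (q ^ (k + 1))‖ else 0

lemma RR_nonneg (q : ℕ) : 0 ≤ RR n s q := by
  unfold RR
  split
  · exact tsum_nonneg fun k => norm_nonneg _
  · exact le_refl 0

set_option maxHeartbeats 1000000 in
lemma RR_le (hn : 0 < n) (hs : 1 < s.re) {q : ℕ} (hq : q.Prime) :
    RR n s q ≤ (64 * n : ℝ) * (q : ℝ) ^ (-s.re) := by
  set r : ℝ := (q : ℝ) ^ (-s.re) with hr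
  have hr0 : 0 ≤ r := Real.rpow_nonneg (Nat.cast_nonneg q) _
  have hr1 : r < 1 := r_lt_one hs hq
  have hrhalf : r ≤ 1 / 2 := r_le_half hs hq
  have hsumgeo : Summable (fun k : ℕ => (32 * n : ℝ) * r ^ (k + 1)) := by
    have : Summable (fun k : ℕ => r ^ (k + 1)) := by
      rw [summable_nat_add_iff 1]
      exact summable_geometric_of_lt_one hr0 hr1
    exact this.mul_left _
  have h1 : RR n s q ≤ ∑' k : ℕ, (32 * n : ℝ) * r ^ (k + 1) := by
    rw [RR, if_pos hq]
    refine Summable.tsum_le_tsum (fun k => ?_) ?_ hsumgeo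
    · have := norm_ff_le hn hs hq (k + 1)
      simpa using this
    · have := summable_norm_ff_pow hn hs hq
      exact ((summable_nat_add_iff 1).mpr this)
  have h2 : ∑' k : ℕ, (32 * n : ℝ) * r ^ (k + 1) = (32 * n : ℝ) * r * (1 - r)⁻¹ := by
    have : ∀ k : ℕ, (32 * n : ℝ) * r ^ (k + 1) = ((32 * n : ℝ) * r) * r ^ k := by
      intro k; ring
    simp_rw [this]
    rw [tsum_mul_left, tsum_geometric_of_lt_one hr0 hr1]
  have h3 : (1 - r)⁻¹ ≤ 2 := by
    rw [inv_le_comm₀ (by linarith) (by norm_num)]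
    linarith
  calc RR n s q ≤ (32 * n : ℝ) * r * (1 - r)⁻¹ := by rw [← h2]; exact h1
  _ ≤ (32 * n : ℝ) * r * 2 := by
      apply mul_le_mul_of_nonneg_left h3
      positivity
  _ = (64 * n : ℝ) * r := by ring

lemma summable_RR (hn : 0 < n) (hs : 1 < s.re) : Summable (RR n s) := by
  refine Summable.of_nonneg_of_le RR_nonneg ?_
    (((Real.summable_nat_rpow.mpr (by linarith : (-s.re) < -1)).mul_left ((64 * n : ℝ))))
  · intro q
    by_cases hq : q.Prime
    · exact RR_le hn hs hq
    · rw [RR, if_neg hq]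
      positivity

lemma summable_norm_ff (hn : 0 < n) (hs : 1 < s.re) :
    Summable (fun m : ℕ => ‖ff n s m‖) := by
  set F : ℕ → ℝ := fun m => ‖ff n s m‖ with hF
  have hF1 : F 1 = 1 := by simp [hF, ff_one]
  have hFmul : ∀ {a b : ℕ}, Nat.Coprime a b → F (a * b) = F a * F b := by
    intro a b hab
    simp only [hF, ff_mul hab, norm_mul]
  have hFsum : ∀ {p : ℕ}, p.Prime → Summable (fun k : ℕ => ‖F (p ^ k)‖) := by
    intro p hp
    simp only [hF, norm_norm]
    exact summable_norm_ff_pow hn hs hp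
  set T : ℝ := ∑' q : ℕ, RR n s q with hT
  apply summable_of_sum_range_le (c := Real.exp T) (fun m => norm_nonneg _)
  intro M
  obtain ⟨hsm, hprod⟩ :=
    EulerProduct.summable_and_hasSum_smoothNumbers_prod_primesBelow_tsum hF1 hFmul hFsum M
  have hsm' : Summable (fun m : M.smoothNumbers => F m) := by
    have := hsm
    simp only [hF, norm_norm] at this ⊢
    exact this
  have hind : Summable (Set.indicator (Nat.smoothNumbers M) F) :=
    summable_subtype_iff_indicator.mp hsm'
  have step1 : ∑ i ∈ Finset.range M, F i ≤ ∏ p ∈ M.primesBelow, ∑' k : ℕ, F (p ^ k) := by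
    calc ∑ i ∈ Finset.range M, F i
        ≤ ∑ i ∈ Finset.range M, Set.indicator (Nat.smoothNumbers M) F i := by
          refine Finset.sum_le_sum fun i hi => ?_
          rcases eq_or_ne i 0 with rfl | hi0
          · have : F 0 = 0 := by simp [hF, ff_zero hs]
            rw [this]
            exact Set.indicator_nonneg (fun m _ => norm_nonneg _) _
          · have hmem : i ∈ Nat.smoothNumbers M := by
              refine ⟨hi0, fun p hp => ?_⟩
              have hdvd : p ∣ i := Nat.dvd_of_mem_primeFactorsList hp
              have := Nat.le_of_dvd (Nat.pos_of_ne_zero hi0) hdvd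
              have hiM : i < M := Finset.mem_range.mp hi
              omega
            rw [Set.indicator_of_mem hmem]
      _ ≤ ∑' i : ℕ, Set.indicator (Nat.smoothNumbers M) F i := by
          refine Summable.sum_le_tsum _ (fun i _ => Set.indicator_nonneg (fun m _ => norm_nonneg _) _) hind
      _ = ∑' m : M.smoothNumbers, F m := (tsum_subtype _ _).symm
      _ = ∏ p ∈ M.primesBelow, ∑' k : ℕ, F (p ^ k) := hprod.tsum_eq
  have step2 : ∏ p ∈ M.primesBelow, (∑' k : ℕ, F (p ^ k)) ≤ Real.exp T := by
    have hfac : ∀ p ∈ M.primesBelow, (∑' k : ℕ, F (p ^ k)) ≤ Real.exp (RR n s p) := by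
      intro p hpm
      have hp : p.Prime := Nat.prime_of_mem_primesBelow hpm
      have hsump : Summable (fun k : ℕ => F (p ^ k)) := by
        have := hFsum hp
        simp only [hF, norm_norm] at this ⊢
        exact this
      have : (∑' k : ℕ, F (p ^ k)) = F (p ^ 0) + ∑' k : ℕ, F (p ^ (k + 1)) :=
        Summable.tsum_eq_zero_add hsump
      rw [this]
      have h0 : F (p ^ 0) = 1 := by simpa using hF1
      rw [h0]
      have hRp : RR n s p = ∑' k : ℕ, F (p ^ (k + 1)) := by rw [RR, if_pos hp]
      rw [← hRp]
      calc 1 + RR n s p = RR n s p + 1 := by ring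
      _ ≤ Real.exp (RR n s p) := Real.add_one_le_exp _
    calc ∏ p ∈ M.primesBelow, (∑' k : ℕ, F (p ^ k))
        ≤ ∏ p ∈ M.primesBelow, Real.exp (RR n s p) :=
          Finset.prod_le_prod (fun p _ => tsum_nonneg fun k => norm_nonneg _) hfac
      _ = Real.exp (∑ p ∈ M.primesBelow, RR n s p) := (Real.exp_sum _ _).symm
      _ ≤ Real.exp T := by
          apply Real.exp_le_exp.mpr
          exact Summable.sum_le_tsum _ (fun i _ => RR_nonneg i) (summable_RR hn hs)
  exact le_trans step1 step2

end Summability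
section Assembly

variable {n : ℕ} {s : ℂ}

lemma cpow_shift (p k : ℕ) (s : ℂ) :
    ((p : ℕ) : ℂ) ^ ((k : ℂ) * s) = (((p ^ k : ℕ)) : ℂ) ^ s := by
  have him : (Complex.log ((p : ℕ) : ℂ) * (k : ℂ)).im = 0 := by
    simp [Complex.mul_im, Complex.log_im, Complex.natCast_arg]
  rw [Complex.cpow_mul s (by rw [him]; linarith [Real.pi_pos]) (by rw [him]; linarith [Real.pi_pos])]
  rw [Complex.cpow_natCast]
  push_cast
  ring_nf

noncomputable def gg (n : ℕ) (s : ℂ) (m : ℕ) : ℂ := if 3 ∣ m then 0 else ff n s m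

lemma gg_zero : gg n s 0 = 0 := by simp [gg]

lemma gg_one : gg n s 1 = 1 := by
  rw [gg, if_neg (by norm_num)]; exact ff_one

lemma gg_mul {a b : ℕ} (h : Nat.Coprime a b) : gg n s (a * b) = gg n s a * gg n s b := by
  have h3 : Nat.Prime 3 := by norm_num
  by_cases ha : 3 ∣ a
  · rw [gg, if_pos (dvd_mul_of_dvd_left ha b), gg, if_pos ha, zero_mul]
  by_cases hb : 3 ∣ b
  · rw [gg, if_pos (dvd_mul_of_dvd_right hb a), gg, gg, if_pos hb, mul_zero]
  have hab : ¬ 3 ∣ a * b := by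
    intro hd
    rcases (Nat.Prime.dvd_mul h3).mp hd with h' | h'
    exacts [ha h', hb h']
  rw [gg, if_neg hab, gg, if_neg ha, gg, if_neg hb]
  exact ff_mul h

lemma summable_norm_gg (hn : 0 < n) (hs : 1 < s.re) :
    Summable (fun m : ℕ => ‖gg n s m‖) := by
  refine Summable.of_nonneg_of_le (fun m => norm_nonneg _) (fun m => ?_) (summable_norm_ff hn hs)
  by_cases h3 : 3 ∣ m
  · rw [gg, if_pos h3, norm_zero]; exact norm_nonneg _
  · rw [gg, if_neg h3]

lemma euler_gg (hn : 0 < n) (hs : 1 < s.re) :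
    HasProd (fun p : Nat.Primes => ∑' e : ℕ, gg n s ((p : ℕ) ^ e)) (∑' m : ℕ, gg n s m) :=
  EulerProduct.eulerProduct_hasProd gg_one (fun {a b} h => gg_mul h)
    (summable_norm_gg hn hs) gg_zero

noncomputable def AA (n : ℕ) (s : ℂ) (k : ℕ) : ℂ :=
  (C (3 ^ (k + 1)) (-(n : ℤ)) : ℂ) / ((3 ^ k : ℕ) : ℂ) ^ s

lemma norm_AA_le (hn : 0 < n) (hs : 1 < s.re) (k : ℕ) :
    ‖AA n s k‖ ≤ (32 * n : ℝ) * ((3 : ℝ) ^ (-s.re)) ^ k := by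
  have h3 : (0 : ℝ) < 3 := by norm_num
  have hp3 : Nat.Prime 3 := by norm_num
  rw [AA, norm_div, Complex.norm_natCast]
  have hcast : ‖(((3 ^ k : ℕ)) : ℂ) ^ s‖ = ((3 : ℝ) ^ s.re) ^ k := by
    rw [show (((3 ^ k : ℕ)) : ℂ) = ((((3 : ℝ) ^ k : ℝ)) : ℂ) by push_cast; rfl,
      Complex.norm_cpow_eq_rpow_re_of_pos (by positivity)]
    rw [← Real.rpow_natCast ((3 : ℝ) ^ s.re) k, ← Real.rpow_natCast (3 : ℝ) k,
      ← Real.rpow_mul h3.le, ← Real.rpow_mul h3.le, mul_comm]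
  rw [hcast]
  have hrpos : (0 : ℝ) < ((3 : ℝ) ^ s.re) ^ k := by positivity
  rw [div_le_iff₀ hrpos]
  have hr : ((3 : ℝ) ^ (-s.re)) ^ k * ((3 : ℝ) ^ s.re) ^ k = 1 := by
    rw [← mul_pow, ← Real.rpow_add h3, neg_add_cancel, Real.rpow_zero, one_pow]
  calc (C (3 ^ (k + 1)) (-(n : ℤ)) : ℝ) ≤ (32 * n : ℝ) := by
        exact_mod_cast C_pow_le n hn hp3 (k + 1)
  _ = (32 * n : ℝ) * (((3 : ℝ) ^ (-s.re)) ^ k * ((3 : ℝ) ^ s.re) ^ k) := by rw [hr, mul_one]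
  _ = (32 * n : ℝ) * ((3 : ℝ) ^ (-s.re)) ^ k * ((3 : ℝ) ^ s.re) ^ k := by ring

lemma summable_norm_AA (hn : 0 < n) (hs : 1 < s.re) :
    Summable (fun k : ℕ => ‖AA n s k‖) := by
  have hp3 : Nat.Prime 3 := by norm_num
  refine Summable.of_nonneg_of_le (fun k => norm_nonneg _) (norm_AA_le hn hs) ?_
  have := r_lt_one (s := s) hs hp3
  have h3 : ((3 : ℕ) : ℝ) = (3 : ℝ) := by norm_num
  rw [h3] at this
  exact (summable_geometric_of_lt_one (by positivity) this).mul_left _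

end Assembly
theorem stmt_8 (n : ℕ) (hn : 0 < n) (s : ℂ) (hs : 1 < s.re) :
    (Summable fun m : ℕ =>
      ‖(C (3 * (m + 1)) (-(n : ℤ)) : ℂ) / ((m + 1 : ℕ) : ℂ) ^ s‖) ∧
    Multipliable (fun p : {p : ℕ // p.Prime ∧ p ≠ 3} =>
      ∑' k : ℕ, (C ((p : ℕ) ^ k) (-(n : ℤ)) : ℂ) / ((p : ℕ) : ℂ) ^ ((k : ℂ) * s)) ∧
    (∑' m : ℕ, (C (3 * (m + 1)) (-(n : ℤ)) : ℂ) / ((m + 1 : ℕ) : ℂ) ^ s) =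
      (∑' k : ℕ, (C (3 ^ (k + 1)) (-(n : ℤ)) : ℂ) / (3 : ℂ) ^ ((k : ℂ) * s)) *
        ∏' p : {p : ℕ // p.Prime ∧ p ≠ 3},
          ∑' k : ℕ, (C ((p : ℕ) ^ k) (-(n : ℤ)) : ℂ) / ((p : ℕ) : ℂ) ^ ((k : ℂ) * s) := by
  classical
  have hp3 : Nat.Prime 3 := by norm_num
  have hs0 : s ≠ 0 := by
    intro h
    rw [h] at hs
    simp at hs
    linarith
  -- the Euler product for gg
  have heuler := euler_gg (n := n) (s := s) hn hs
  set three : Nat.Primes := ⟨3, hp3⟩ with h3def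
  set G : Nat.Primes → ℂ := fun p => ∑' e : ℕ, gg n s ((p : ℕ) ^ e) with hG
  have hG3 : G three = 1 := by
    rw [hG]
    have he : ∀ e : ℕ, gg n s ((three : ℕ) ^ e) = if e = 0 then 1 else 0 := by
      intro e
      rcases e with _ | e
      · simpa using gg_one
      · rw [show ((three : ℕ) : ℕ) = 3 from rfl, gg,
          if_pos (dvd_pow_self 3 (Nat.succ_ne_zero e))]
        simp
    simp only
    rw [tsum_congr he, tsum_ite_eq]
  have hsupp : Function.mulSupport G ⊆ {q : Nat.Primes | q ≠ three} := by
    intro q hq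
    simp only [Set.mem_setOf_eq]
    intro h
    rw [h] at hq
    exact hq hG3
  have hProdSub : HasProd (fun q : {q : Nat.Primes | q ≠ three} => G q) (∑' m : ℕ, gg n s m) :=
    (hasProd_subtype_iff_of_mulSupport_subset hsupp).mpr heuler
  set E : {p : ℕ // p.Prime ∧ p ≠ 3} ≃ {q : Nat.Primes | q ≠ three} :=
    { toFun := fun x => ⟨⟨x.1, x.2.1⟩, fun h => x.2.2 (congrArg Subtype.val h)⟩
      invFun := fun q => ⟨((q : Nat.Primes) : ℕ), ⟨(q : Nat.Primes).2,
        fun h => q.2 (Subtype.ext h)⟩⟩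
      left_inv := fun x => rfl
      right_inv := fun q => rfl } with hE
  set W : {p : ℕ // p.Prime ∧ p ≠ 3} → ℂ :=
    fun p => ∑' k : ℕ, (C ((p : ℕ) ^ k) (-(n : ℤ)) : ℂ) / ((p : ℕ) : ℂ) ^ ((k : ℂ) * s) with hW
  have hkey : ∀ p : {p : ℕ // p.Prime ∧ p ≠ 3}, W p = G (E p).1 := by
    intro p
    rw [hW, hG]
    simp only
    apply tsum_congr
    intro k
    have h3nd : ¬ (3 ∣ (p : ℕ) ^ k) := by
      intro hdvd
      have h1 := hp3.dvd_of_dvd_pow hdvd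
      have h2 := (Nat.prime_dvd_prime_iff_eq hp3 p.2.1).mp h1
      exact p.2.2 h2.symm
    show (C ((p : ℕ) ^ k) (-(n : ℤ)) : ℂ) / ((p : ℕ) : ℂ) ^ ((k : ℂ) * s)
      = gg n s ((p : ℕ) ^ k)
    rw [gg, if_neg h3nd, ff, cpow_shift]
  have hWprod : HasProd W (∑' m : ℕ, gg n s m) := by
    rw [show W = (fun q : {q : Nat.Primes | q ≠ three} => G q) ∘ E from funext hkey]
    exact (Equiv.hasProd_iff E).mpr hProdSub
  -- the sum decomposition
  set N : ℤ := -(n : ℤ) with hN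
  set hh : ℕ → ℂ := fun m => (C (3 * m) N : ℂ) / ((m : ℕ) : ℂ) ^ s with hhh
  have hh0 : hh 0 = 0 := by
    simp [hhh, Complex.zero_cpow hs0]
  set U := {u : ℕ // ¬ 3 ∣ u} with hU
  set j : ℕ × U → ℕ := fun x => 3 ^ x.1 * (x.2 : ℕ) with hj
  have hjinj : Function.Injective j := by
    rintro ⟨k, u, hu⟩ ⟨l, w, hw⟩ h
    simp only [hj] at h
    have hu0 : u ≠ 0 := fun h0 => hu (h0 ▸ dvd_zero 3)
    have hw0 : w ≠ 0 := fun h0 => hw (h0 ▸ dvd_zero 3)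
    have hkl : k = l := by
      have h1 := congrArg (fun m => m.factorization 3) h
      rw [Nat.factorization_mul (pow_ne_zero _ (by norm_num)) hu0,
        Nat.factorization_mul (pow_ne_zero _ (by norm_num)) hw0,
        Nat.Prime.factorization_pow hp3, Nat.Prime.factorization_pow hp3] at h1
      simp only [Finsupp.add_apply, Finsupp.single_eq_same,
        Nat.factorization_eq_zero_of_not_dvd hu, Nat.factorization_eq_zero_of_not_dvd hw] at h1
      omega
    subst hkl
    have : u = w := Nat.eq_of_mul_eq_mul_left ((by positivity : 0 < 3 ^ k)) h
    simp [this]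
  have hjrange : ∀ m : ℕ, m ≠ 0 → m ∈ Set.range j := by
    intro m hm
    exact ⟨⟨m.factorization 3, ⟨m / 3 ^ (m.factorization 3),
      Nat.not_dvd_ordCompl hp3 hm⟩⟩, Nat.ordProj_mul_ordCompl_eq_self m 3⟩
  have hcomp : ∀ x : ℕ × U, hh (j x) = AA n s x.1 * ff n s (x.2 : ℕ) := by
    rintro ⟨k, u, hu⟩
    have hcop : Nat.Coprime (3 ^ (k + 1)) u :=
      Nat.Coprime.pow_left _ ((Nat.Prime.coprime_iff_not_dvd hp3).mpr hu)
    show (C (3 * (3 ^ k * u)) N : ℂ) / (((3 ^ k * u : ℕ)) : ℂ) ^ s = _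
    have h1 : 3 * (3 ^ k * u) = 3 ^ (k + 1) * u := by ring
    rw [h1, C_mul hcop]
    have hcpow : ((3 ^ k * u : ℕ) : ℂ) ^ s = (((3 ^ k : ℕ)) : ℂ) ^ s * ((u : ℕ) : ℂ) ^ s := by
      have := Complex.mul_cpow_ofReal_nonneg (a := ((3 ^ k : ℕ) : ℝ)) (b := ((u : ℕ) : ℝ))
        (by positivity) (by positivity) s
      push_cast at this ⊢
      exact this
    rw [hcpow, AA, ff]
    push_cast
    rw [div_mul_div_comm]
  -- summability statements
  have hsumff := summable_norm_ff (n := n) (s := s) hn hs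
  have hsumAA := summable_norm_AA (n := n) (s := s) hn hs
  have hsumffU : Summable (fun u : U => ‖ff n s (u : ℕ)‖) :=
    hsumff.comp_injective Subtype.val_injective
  have hsumProd : Summable (fun x : ℕ × U => ‖AA n s x.1 * ff n s (x.2 : ℕ)‖) := by
    have hmul := Summable.mul_of_nonneg hsumAA hsumffU
      (fun k => norm_nonneg _) (fun u => norm_nonneg _)
    refine hmul.congr fun x => ?_
    exact (norm_mul _ _).symm
  have hsupphh : ∀ x ∉ Set.range j, ‖hh x‖ = 0 := by
    intro m hm
    rcases eq_or_ne m 0 with rfl | hm0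
    · rw [hh0, norm_zero]
    · exact absurd (hjrange m hm0) hm
  have hsumhh : Summable (fun m : ℕ => ‖hh m‖) := by
    refine (Function.Injective.summable_iff hjinj hsupphh).mp ?_
    refine hsumProd.congr fun x => ?_
    rw [Function.comp_apply, hcomp x]
  have conj1 : Summable (fun m : ℕ => ‖hh (m + 1)‖) := by
    have := (summable_nat_add_iff (f := fun m => ‖hh m‖) 1).mpr hsumhh
    exact this
  -- tsum computations
  have hsum_hh : Summable hh := hsumhh.of_norm
  have t1 : ∑' m : ℕ, hh (m + 1) = ∑' m : ℕ, hh m := by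
    have h := Summable.tsum_eq_zero_add hsum_hh
    rw [hh0, zero_add] at h
    exact h.symm
  have hsupphh' : Function.support hh ⊆ Set.range j := by
    intro m hm
    rcases eq_or_ne m 0 with rfl | hm0
    · exact absurd hh0 hm
    · exact hjrange m hm0
  have t2 : ∑' m : ℕ, hh m = ∑' x : ℕ × U, AA n s x.1 * ff n s (x.2 : ℕ) := by
    rw [← Function.Injective.tsum_eq hjinj hsupphh']
    exact tsum_congr hcomp
  have t3 : ∑' x : ℕ × U, AA n s x.1 * ff n s (x.2 : ℕ)
      = (∑' k : ℕ, AA n s k) * (∑' u : U, ff n s (u : ℕ)) :=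
    (tsum_mul_tsum_of_summable_norm hsumAA hsumffU).symm
  have hsuppgg : Function.support (gg n s) ⊆ {u : ℕ | ¬ 3 ∣ u} := by
    intro m hm
    simp only [Set.mem_setOf_eq]
    intro h3m
    exact hm (by rw [gg, if_pos h3m])
  have t4 : ∑' u : U, ff n s (u : ℕ) = ∑' m : ℕ, gg n s m := by
    have e1 : ∑' u : U, ff n s (u : ℕ) = ∑' u : U, gg n s (u : ℕ) :=
      tsum_congr fun u => by rw [gg, if_neg u.2]
    rw [e1]
    exact tsum_subtype_eq_of_support_subset hsuppgg
  have t5 : (∑' k : ℕ, (C (3 ^ (k + 1)) (-(n : ℤ)) : ℂ) / (3 : ℂ) ^ ((k : ℂ) * s))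
      = ∑' k : ℕ, AA n s k := by
    apply tsum_congr
    intro k
    rw [AA, ← cpow_shift 3 k s]
    norm_num
  refine ⟨conj1, hWprod.multipliable, ?_⟩
  calc ∑' m : ℕ, hh (m + 1) = ∑' m : ℕ, hh m := t1
    _ = ∑' x : ℕ × U, AA n s x.1 * ff n s (x.2 : ℕ) := t2
    _ = (∑' k : ℕ, AA n s k) * (∑' u : U, ff n s (u : ℕ)) := t3
    _ = (∑' k : ℕ, AA n s k) * (∑' m : ℕ, gg n s m) := by rw [t4]
    _ = (∑' k : ℕ, (C (3 ^ (k + 1)) (-(n : ℤ)) : ℂ) / (3 : ℂ) ^ ((k : ℂ) * s)) * ∏' p, W p := by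
        rw [t5, hWprod.tprod_eq]
end

section
/- Let n be a positive integer, p a prime with p ∤ 6n, and s a real number with s > 0. Then Σ_{k=0}^∞ C(p^k, −n) · p^{−ks} = (1 − p^{−2s}) / ((1 − p^{−s}) · (1 − (−n/p) · p^{−s})), where (−n/p) is the Legendre symbol of −n modulo p. -/
section aux

variable {p : ℕ}

lemma not_dvd_x (hp : p.Prime) {a x : ℤ} (hpa : ¬ (p:ℤ) ∣ a)
    (hx : (p:ℤ) ∣ x^2 - a) : ¬ (p:ℤ) ∣ x := by
  intro h
  have h2 : (p:ℤ) ∣ x^2 := by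
    have := h.mul_left x
    rwa [← sq] at this
  have : (p:ℤ) ∣ a := by
    have := h2.sub hx
    simpa using this
  exact hpa this

lemma not_dvd_2x (hp : p.Prime) (hp2 : p ≠ 2) {a x : ℤ} (hpa : ¬ (p:ℤ) ∣ a)
    (hx : (p:ℤ) ∣ x^2 - a) : ¬ (p:ℤ) ∣ 2 * x := by
  have hpp : Prime (p:ℤ) := Nat.prime_iff_prime_int.mp hp
  intro h
  rcases hpp.dvd_mul.mp h with h | h
  · have : (p:ℕ) ∣ 2 := by exact_mod_cast h
    exact hp2 ((Nat.prime_dvd_prime_iff_eq hp Nat.prime_two).mp this)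
  · exact not_dvd_x hp hpa hx h

lemma step_inj (hp : p.Prime) (hp2 : p ≠ 2) {a : ℤ} (hpa : ¬ (p:ℤ) ∣ a)
    {k : ℕ} (hk : 1 ≤ k) {x y : ℤ}
    (hx : (p:ℤ)^(k+1) ∣ x^2 - a) (hy : (p:ℤ)^(k+1) ∣ y^2 - a)
    (hxy : (p:ℤ)^k ∣ x - y) : (p:ℤ)^(k+1) ∣ x - y := by
  have hpp : Prime (p:ℤ) := Nat.prime_iff_prime_int.mp hp
  obtain ⟨u, hu⟩ := hxy
  have hdiff : (p:ℤ)^(k+1) ∣ (p:ℤ)^k * (u * (x + y)) := by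
    have h1 : (p:ℤ)^(k+1) ∣ (x^2 - a) - (y^2 - a) := hx.sub hy
    have h2 : (x^2 - a) - (y^2 - a) = (p:ℤ)^k * (u * (x + y)) := by
      rw [show x^2 - a - (y^2 - a) = (x - y) * (x + y) by ring, hu]; ring
    rwa [h2] at h1
  have hdvd : (p:ℤ) ∣ u * (x + y) := by
    rw [pow_succ] at hdiff
    exact (mul_dvd_mul_iff_left (pow_ne_zero k hpp.ne_zero)).mp hdiff
  have hxsum : ¬ (p:ℤ) ∣ x + y := by
    intro h
    have hxy1 : (p:ℤ) ∣ x - y := hu ▸ (dvd_pow_self (p:ℤ) (Nat.one_le_iff_ne_zero.mp hk)).mul_right u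
    have h2x : (p:ℤ) ∣ 2 * x := by
      have := h.add hxy1
      rwa [show x + y + (x - y) = 2 * x by ring] at this
    have hxp : (p:ℤ) ∣ x^2 - a := (dvd_pow_self (p:ℤ) (Nat.succ_ne_zero k)).trans hx
    exact not_dvd_2x hp hp2 hpa hxp h2x
  have hpu : (p:ℤ) ∣ u := (hpp.dvd_mul.mp hdvd).resolve_right hxsum
  obtain ⟨v, hv⟩ := hpu
  exact ⟨v, by rw [hu, hv, pow_succ]; ring⟩

lemma step_lift (hp : p.Prime) (hp2 : p ≠ 2) {a : ℤ} (hpa : ¬ (p:ℤ) ∣ a)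
    {k : ℕ} (hk : 1 ≤ k) {x : ℤ} (hx : (p:ℤ)^k ∣ x^2 - a) :
    ∃ j : ℤ, (p:ℤ)^(k+1) ∣ (x + (p:ℤ)^k * j)^2 - a := by
  have hpp : Prime (p:ℤ) := Nat.prime_iff_prime_int.mp hp
  obtain ⟨t, ht⟩ := hx
  have hxp : (p:ℤ) ∣ x^2 - a :=
    (dvd_pow_self (p:ℤ) (Nat.one_le_iff_ne_zero.mp hk)).trans ⟨t, ht⟩
  have h2x : ¬ (p:ℤ) ∣ 2 * x := not_dvd_2x hp hp2 hpa hxp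
  have hco : IsCoprime (2 * x) (p:ℤ) := (hpp.coprime_iff_not_dvd).mpr h2x |>.symm
  obtain ⟨u, v, huv⟩ := hco
  set j : ℤ := -t * u with hj
  refine ⟨j, ?_⟩
  have key : t + 2 * x * j = (p:ℤ) * (t * v) := by
    have h1 : (1:ℤ) - u * (2 * x) = v * (p:ℤ) := by linarith
    calc t + 2 * x * j = t * (1 - u * (2 * x)) := by rw [hj]; ring
      _ = t * (v * (p:ℤ)) := by rw [h1]
      _ = (p:ℤ) * (t * v) := by ring
  have e : (x + (p:ℤ)^k * j)^2 - a
      = ((p:ℤ)^k * t + (p:ℤ)^k * (2 * x * j)) + ((p:ℤ)^k)^2 * j^2 := by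
    rw [← ht]; ring
  have e2 : ((p:ℤ)^k)^2 = (p:ℤ)^(k+1) * (p:ℤ)^(k-1) := by
    rw [← pow_mul, ← pow_add]; congr 1; omega
  refine ⟨t * v + (p:ℤ)^(k-1) * j^2, ?_⟩
  rw [e, e2, show (p:ℤ)^k * t + (p:ℤ)^k * (2*x*j) = (p:ℤ)^k * (t + 2*x*j) from by ring,
    key, pow_succ]
  ring

end aux


lemma sq_eq_iff_val {m : ℕ} [NeZero m] (a : ℤ) (x : ZMod m) :
    x^2 = (a : ZMod m) ↔ (m:ℤ) ∣ (x.val:ℤ)^2 - a := by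
  rw [← ZMod.intCast_zmod_eq_zero_iff_dvd, Int.cast_sub, Int.cast_pow, Int.cast_natCast,
    ZMod.natCast_val, ZMod.cast_id, sub_eq_zero, eq_comm]

lemma card_step {p : ℕ} (hp : p.Prime) (hp2 : p ≠ 2) {a : ℤ} (hpa : ¬ (p:ℤ) ∣ a)
    {k : ℕ} (hk : 1 ≤ k) : C (p^(k+1)) a = C (p^k) a := by
  have hM : NeZero (p^(k+1)) := ⟨pow_ne_zero _ hp.ne_zero⟩
  have hm : NeZero (p^k) := ⟨pow_ne_zero _ hp.ne_zero⟩
  have hdvd : p^k ∣ p^(k+1) := pow_dvd_pow p (by omega)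
  set f : {x : ZMod (p^(k+1)) // x^2 = (a : ZMod (p^(k+1)))} →
      {y : ZMod (p^k) // y^2 = (a : ZMod (p^k))} :=
    fun x => ⟨ZMod.castHom hdvd (ZMod (p^k)) x.1, by
      have h := congrArg (ZMod.castHom hdvd (ZMod (p^k))) x.2
      rw [map_pow, map_intCast] at h
      exact h⟩ with hf
  have hcast : ∀ x : ZMod (p^(k+1)),
      ZMod.castHom hdvd (ZMod (p^k)) x = ((x.val : ℤ) : ZMod (p^k)) := by
    intro x
    rw [Int.cast_natCast, ZMod.natCast_val, ZMod.castHom_apply]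
  have hinj : Function.Injective f := by
    rintro ⟨x₁, h₁⟩ ⟨x₂, h₂⟩ hfe
    have hee : ((x₁.val : ℤ) : ZMod (p^k)) = ((x₂.val : ℤ) : ZMod (p^k)) := by
      have h := congrArg Subtype.val hfe
      simpa only [hf, hcast] using h
    rw [ZMod.intCast_eq_intCast_iff] at hee
    have hd : ((p:ℤ))^k ∣ (x₁.val : ℤ) - (x₂.val : ℤ) := by
      have h := dvd_sub_comm.mp (Int.ModEq.dvd hee)
      push_cast at h ⊢
      exact h
    rw [sq_eq_iff_val] at h₁ h₂
    push_cast at h₁ h₂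
    have hstep := step_inj hp hp2 hpa hk h₁ h₂ hd
    have heq : ((x₁.val : ℤ) : ZMod (p^(k+1))) = ((x₂.val : ℤ) : ZMod (p^(k+1))) := by
      rw [ZMod.intCast_eq_intCast_iff]
      rw [Int.modEq_iff_dvd]
      have h := dvd_sub_comm.mp hstep
      push_cast
      exact h
    rw [Int.cast_natCast, Int.cast_natCast, ZMod.natCast_val, ZMod.natCast_val,
      ZMod.cast_id, ZMod.cast_id] at heq
    exact Subtype.ext heq
  have hsurj : Function.Surjective f := by
    rintro ⟨y, hy⟩
    rw [sq_eq_iff_val] at hy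
    push_cast at hy
    obtain ⟨j, hj⟩ := step_lift hp hp2 hpa hk hy
    set X : ℤ := (y.val : ℤ) + (p:ℤ)^k * j with hX
    refine ⟨⟨(X : ZMod (p^(k+1))), ?_⟩, ?_⟩
    · have hj' : (((p^(k+1) : ℕ)):ℤ) ∣ X^2 - a := by push_cast; exact hj
      rw [← ZMod.intCast_zmod_eq_zero_iff_dvd] at hj'
      push_cast at hj'
      rw [sub_eq_zero] at hj'
      exact hj'
    · apply Subtype.ext
      show ZMod.castHom hdvd (ZMod (p^k)) ((X : ℤ) : ZMod (p^(k+1))) = y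
      rw [map_intCast, hX]
      push_cast
      rw [ZMod.natCast_val, ZMod.cast_id,
        show ((p : ZMod (p^k)))^k = 0 from by rw [← Nat.cast_pow, ZMod.natCast_self],
        zero_mul, add_zero]
  exact Nat.card_eq_of_bijective f ⟨hinj, hsurj⟩

lemma card_pow_eq {p : ℕ} (hp : p.Prime) (hp2 : p ≠ 2) {a : ℤ} (hpa : ¬ (p:ℤ) ∣ a)
    {k : ℕ} (hk : 1 ≤ k) : C (p^k) a = C p a := by
  induction k with
  | zero => omega
  | succ k ih =>
    rcases Nat.eq_or_lt_of_le hk with h | h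
    · rw [← h]; simp
    · rw [card_step hp hp2 hpa (by omega)]
      exact ih (by omega)

lemma card_one (a : ℤ) : C 1 a = 1 := by
  have : Unique {x : ZMod 1 // x ^ 2 = (a : ZMod 1)} :=
    { default := ⟨0, Subsingleton.elim _ _⟩, uniq := fun x => Subtype.ext (Subsingleton.elim _ _) }
  exact Nat.card_unique

lemma card_prime (p : ℕ) [Fact p.Prime] (hp2 : p ≠ 2) (a : ℤ) :
    (C p a : ℤ) = legendreSym p a + 1 := by
  rw [← legendreSym.card_sqrts p hp2 a]
  congr 1
  rw [C, ← Set.ncard_eq_toFinset_card' {x : ZMod p | x ^ 2 = (a : ZMod p)},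
    ← Nat.card_coe_set_eq]
  rfl

theorem stmt_9 (n : ℕ) (hn : 0 < n) (p : ℕ) [Fact p.Prime] (hp : ¬ p ∣ 6 * n)
    (s : ℝ) (hs : 0 < s) :
    ∑' k : ℕ, (C (p ^ k) (-(n : ℤ)) : ℝ) * (p : ℝ) ^ (-(k : ℝ) * s) =
      (1 - (p : ℝ) ^ (-(2 * s))) /
        ((1 - (p : ℝ) ^ (-s)) * (1 - (legendreSym p (-(n : ℤ)) : ℝ) * (p : ℝ) ^ (-s))) := by
  have hpp : p.Prime := Fact.out
  have hp2 : p ≠ 2 := by rintro rfl; exact hp ⟨3 * n, by ring⟩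
  have hpn : ¬ p ∣ n := fun h => hp (h.mul_left 6)
  set a : ℤ := -(n : ℤ) with ha
  have hpa : ¬ (p:ℤ) ∣ a := by
    rw [ha, dvd_neg, Int.natCast_dvd_natCast]; exact hpn
  have hp1R : (1:ℝ) < p := by exact_mod_cast hpp.one_lt
  have hp0R : (0:ℝ) < p := by positivity
  set t : ℝ := (p:ℝ) ^ (-s) with htdef
  have ht0 : 0 < t := Real.rpow_pos_of_pos hp0R _
  have ht1 : t < 1 := Real.rpow_lt_one_of_one_lt_of_neg hp1R (by linarith)
  have htk : ∀ k : ℕ, (p : ℝ) ^ (-(k : ℝ) * s) = t ^ k := by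
    intro k
    rw [htdef, ← Real.rpow_natCast ((p:ℝ) ^ (-s)) k, ← Real.rpow_mul hp0R.le]
    ring_nf
  set χ : ℤ := legendreSym p a with hχ
  have ha0 : (a : ZMod p) ≠ 0 := by
    rw [Ne, ZMod.intCast_zmod_eq_zero_iff_dvd]; exact hpa
  have hχ1 : χ = 1 ∨ χ = -1 := legendreSym.eq_one_or_neg_one p ha0
  set c : ℝ := (C p a : ℝ) with hc
  have hcχ : c = (χ:ℝ) + 1 := by
    rw [hc]; exact_mod_cast card_prime p hp2 a
  set g : ℕ → ℝ := fun k => (C (p ^ k) a : ℝ) * t ^ k with hg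
  have hg0 : g 0 = 1 := by simp [hg, card_one]
  have hgs : ∀ k : ℕ, g (k + 1) = (c * t) * t ^ k := by
    intro k
    rw [hg]
    simp only
    rw [card_pow_eq hpp hp2 hpa (Nat.le_add_left 1 k), pow_succ]
    rw [hc]; ring
  have hsum1 : Summable (fun k => (c * t) * t ^ k) :=
    (summable_geometric_of_lt_one ht0.le ht1).mul_left _
  have hsumg : Summable g := by
    rw [← summable_nat_add_iff 1]
    exact hsum1.congr fun k => (hgs k).symm
  have hT : ∑' k : ℕ, g k = 1 + c * t * (1 - t)⁻¹ := by
    rw [hsumg.tsum_eq_zero_add, hg0]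
    congr 1
    rw [tsum_congr hgs, tsum_mul_left, tsum_geometric_of_lt_one ht0.le ht1]
  have hLHS : ∑' k : ℕ, (C (p ^ k) a : ℝ) * (p : ℝ) ^ (-(k : ℝ) * s) = ∑' k : ℕ, g k :=
    tsum_congr fun k => by rw [htk k, hg]
  have ht2 : (p : ℝ) ^ (-(2 * s)) = t ^ 2 := by
    rw [htdef, ← Real.rpow_natCast ((p:ℝ) ^ (-s)) 2, ← Real.rpow_mul hp0R.le]
    norm_num
    ring_nf
  rw [hLHS, hT, ht2]
  have h1t : (1:ℝ) - t ≠ 0 := by linarith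
  have h1t' : (1:ℝ) + t ≠ 0 := by linarith
  rcases hχ1 with h | h <;> rw [hcχ, h] <;> push_cast <;>
    [skip; norm_num] <;> field_simp <;> ring
end

section
/- Let p be a prime with p ∉ {2, 3}, let n = p^r · n₀ with r an odd positive integer and n₀ a positive integer not divisible by p, and let s be a real number with s > 1/2. Then Σ_{k=0}^∞ C(p^k, −n) · p^{−ks} = ((1 − p^{−2s}) / (1 − p^{−s})) · ((1 − p^{(1−2s)(r+1)/2}) / (1 − p^{1−2s})). In particular, if r = 1 this sum equals (1 − p^{−2s}) / (1 − p^{−s}). -/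
lemma sq_dvd_aux' {p k a : ℕ} (hp : p.Prime) (h : p ^ k ∣ a ^ 2) : p ^ ((k+1)/2) ∣ a := by
  rcases eq_or_ne a 0 with rfl | ha
  · exact dvd_zero _
  · rw [hp.pow_dvd_iff_le_factorization (pow_ne_zero 2 ha)] at h
    rw [hp.pow_dvd_iff_le_factorization ha]
    rw [Nat.factorization_pow] at h
    simp only [Finsupp.smul_apply, smul_eq_mul] at h
    omega

lemma card_sq_zero' {p : ℕ} (hp : p.Prime) (k : ℕ) :
    Nat.card {x : ZMod (p ^ k) // x ^ 2 = 0} = p ^ (k / 2) := by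
  haveI : NeZero (p ^ k) := ⟨(pow_pos hp.pos k).ne'⟩
  rw [Nat.card_eq_fintype_card, Fintype.card_subtype, ← Finset.card_range (p ^ (k/2))]
  refine (Finset.card_bij (fun b _ => ((p ^ ((k+1)/2) * b : ℕ) : ZMod (p ^ k))) ?_ ?_ ?_).symm
  · intro b hb
    simp only [Finset.mem_filter, Finset.mem_univ, true_and]
    rw [← Nat.cast_pow, ZMod.natCast_eq_zero_iff]
    have h1 : p ^ k ∣ (p ^ ((k+1)/2)) ^ 2 := by
      rw [← pow_mul]; exact pow_dvd_pow p (by omega)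
    calc p ^ k ∣ (p ^ ((k+1)/2)) ^ 2 * b ^ 2 := h1.mul_right _
      _ = (p ^ ((k+1)/2) * b) ^ 2 := (mul_pow ..).symm
  · intro b₁ hb₁ b₂ hb₂ h
    have l : ∀ b : ℕ, b ∈ Finset.range (p ^ (k/2)) → p ^ ((k+1)/2) * b < p ^ k := by
      intro b hb
      rw [Finset.mem_range] at hb
      calc p ^ ((k+1)/2) * b < p ^ ((k+1)/2) * p ^ (k/2) :=
        (Nat.mul_lt_mul_left (pow_pos hp.pos _)).mpr hb
      _ = p ^ k := by rw [← pow_add]; congr 1; omega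
    have := congrArg ZMod.val h
    rw [ZMod.val_cast_of_lt (l b₁ hb₁), ZMod.val_cast_of_lt (l b₂ hb₂)] at this
    exact Nat.eq_of_mul_eq_mul_left (pow_pos hp.pos _) this
  · intro x hx
    simp only [Finset.mem_filter, Finset.mem_univ, true_and] at hx
    have h2 : p ^ k ∣ x.val ^ 2 := by
      rw [← ZMod.natCast_eq_zero_iff, Nat.cast_pow, ZMod.natCast_val, ZMod.cast_id]
      exact hx
    obtain ⟨c, hc⟩ := sq_dvd_aux' hp h2
    refine ⟨c, ?_, ?_⟩
    · rw [Finset.mem_range]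
      by_contra hcl
      push_neg at hcl
      have : p ^ k ≤ x.val := by
        calc p ^ k = p ^ ((k+1)/2) * p ^ (k/2) := by rw [← pow_add]; congr 1; omega
        _ ≤ p ^ ((k+1)/2) * c := Nat.mul_le_mul_left _ hcl
        _ = x.val := hc.symm
      exact absurd (ZMod.val_lt x) (not_lt.mpr this)
    · show ((p ^ ((k+1)/2) * c : ℕ) : ZMod (p ^ k)) = x
      rw [← hc, ZMod.natCast_val, ZMod.cast_id]

lemma no_sol' {p r n₀ k : ℕ} (hp : p.Prime) (hpn₀ : ¬ p ∣ n₀) (hr : Odd r) (hk : r < k) :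
    IsEmpty {x : ZMod (p ^ k) // x ^ 2 = ((-((p:ℤ) ^ r * n₀)) : ℤ)} := by
  haveI : NeZero (p ^ k) := ⟨(pow_pos hp.pos k).ne'⟩
  constructor
  rintro ⟨x, hx⟩
  have h1 : ((x.val ^ 2 + p ^ r * n₀ : ℕ) : ZMod (p ^ k)) = 0 := by
    push_cast
    rw [ZMod.natCast_val, ZMod.cast_id, hx]
    push_cast
    ring
  rw [ZMod.natCast_eq_zero_iff] at h1
  set a := x.val ^ 2 + p ^ r * n₀ with ha
  rcases eq_or_ne x.val 0 with h0 | h0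
  · rw [ha, h0] at h1
    have : p ^ (r + 1) ∣ p ^ r * n₀ := dvd_trans (pow_dvd_pow p hk) (by simpa using h1)
    rw [pow_succ] at this
    exact hpn₀ ((mul_dvd_mul_iff_left (pow_ne_zero r hp.pos.ne')).mp this)
  · set t := x.val.factorization p with ht
    have hxv2 : x.val ^ 2 ≠ 0 := pow_ne_zero 2 h0
    have hfact : (x.val ^ 2).factorization p = 2 * t := by
      rw [Nat.factorization_pow]; simp [ht]
    obtain ⟨mm, hmm⟩ := hr
    have hne : 2 * t ≠ r := by omega
    rcases lt_or_gt_of_ne hne with hlt | hgt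
    · have d1 : p ^ (2*t+1) ∣ a := dvd_trans (pow_dvd_pow p (by omega)) h1
      have d2 : p ^ (2*t+1) ∣ p ^ r * n₀ := dvd_trans (pow_dvd_pow p (by omega)) (dvd_mul_right _ _)
      have d3 : p ^ (2*t+1) ∣ x.val ^ 2 := by
        have := Nat.dvd_sub d1 d2
        simpa [ha] using this
      rw [hp.pow_dvd_iff_le_factorization hxv2, hfact] at d3
      omega
    · have d1 : p ^ (r+1) ∣ a := dvd_trans (pow_dvd_pow p (by omega)) h1
      have d3 : p ^ (r+1) ∣ x.val ^ 2 := by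
        rw [hp.pow_dvd_iff_le_factorization hxv2, hfact]; omega
      have d2 : p ^ (r+1) ∣ p ^ r * n₀ := by
        have := Nat.dvd_sub d1 d3
        simpa [ha] using this
      rw [pow_succ] at d2
      exact hpn₀ ((mul_dvd_mul_iff_left (pow_ne_zero r hp.pos.ne')).mp d2)

lemma pair_sum' (P s : ℝ) (hP : 0 < P) (m : ℕ) :
    ∑ k ∈ Finset.range (2*m+2), P ^ ((((k/2 : ℕ)) : ℝ) + -(k : ℝ) * s) =
    (1 + P ^ (-s)) * ∑ j ∈ Finset.range (m+1), (P ^ (1 - 2*s)) ^ j := by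
  induction m with
  | zero => norm_num [Finset.sum_range_succ, Real.rpow_zero]
  | succ m ih =>
    have key : P ^ (((((2*m+2)/2 : ℕ)) : ℝ) + -((2*m+2 : ℕ) : ℝ) * s)
        + P ^ (((((2*m+2+1)/2 : ℕ)) : ℝ) + -((2*m+2+1 : ℕ) : ℝ) * s)
        = (1 + P ^ (-s)) * (P ^ (1-2*s)) ^ (m+1) := by
      rw [show (2*m+2)/2 = m+1 from by omega, show (2*m+2+1)/2 = m+1 from by omega,
        ← Real.rpow_natCast (P ^ (1-2*s)) (m+1), ← Real.rpow_mul hP.le,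
        add_mul, one_mul, ← Real.rpow_add hP]
      congr 1
      · congr 1; push_cast; ring
      · congr 1; push_cast; ring
    rw [show 2*(m+1)+2 = ((2*m+2)+1)+1 from by ring, Finset.sum_range_succ,
      Finset.sum_range_succ, ih, Finset.sum_range_succ ((P ^ (1-2*s)) ^ ·) (m+1),
      mul_add, ← key]
    ring

theorem stmt_11 (p : ℕ) (hp : p.Prime) (hp2 : p ≠ 2) (hp3 : p ≠ 3)
    (r : ℕ) (hr : Odd r) (hrpos : 0 < r) (n₀ : ℕ) (hn₀ : 0 < n₀) (hpn₀ : ¬ p ∣ n₀)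
    (s : ℝ) (hs : 1 / 2 < s) :
    (∑' k : ℕ, (C (p ^ k) (-((p : ℤ) ^ r * n₀)) : ℝ) * (p : ℝ) ^ (-(k : ℝ) * s) =
      ((1 - (p : ℝ) ^ (-(2 * s))) / (1 - (p : ℝ) ^ (-s))) *
        ((1 - (p : ℝ) ^ ((1 - 2 * s) * ((r : ℝ) + 1) / 2)) / (1 - (p : ℝ) ^ (1 - 2 * s)))) ∧
    (r = 1 → ∑' k : ℕ, (C (p ^ k) (-((p : ℤ) ^ r * n₀)) : ℝ) * (p : ℝ) ^ (-(k : ℝ) * s) =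
      (1 - (p : ℝ) ^ (-(2 * s))) / (1 - (p : ℝ) ^ (-s))) := by
  have hP1 : (1:ℝ) < (p:ℝ) := by exact_mod_cast hp.one_lt
  have hP0 : (0:ℝ) < (p:ℝ) := lt_trans one_pos hP1
  have hslt : -s < 0 := by linarith
  have h2slt : 1 - 2*s < 0 := by linarith
  have hps1 : (p:ℝ) ^ (-s) < 1 := Real.rpow_lt_one_of_one_lt_of_neg hP1 hslt
  have hq1 : (p:ℝ) ^ (1 - 2*s) < 1 := Real.rpow_lt_one_of_one_lt_of_neg hP1 h2slt
  have hps_ne : (1:ℝ) - (p:ℝ) ^ (-s) ≠ 0 := by linarith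
  have hq_ne : (1:ℝ) - (p:ℝ) ^ (1 - 2*s) ≠ 0 := by linarith
  have hq_ne1 : (p:ℝ) ^ (1 - 2*s) ≠ 1 := by linarith
  -- values of C
  have hCgt : ∀ k, r < k → C (p ^ k) (-((p : ℤ) ^ r * n₀)) = 0 := by
    intro k hk
    haveI := no_sol' hp hpn₀ hr hk
    exact Nat.card_of_isEmpty
  have hCle : ∀ k, k ≤ r → C (p ^ k) (-((p : ℤ) ^ r * n₀)) = p ^ (k / 2) := by
    intro k hk
    have h0 : (Int.cast (-((p:ℤ) ^ r * n₀)) : ZMod (p ^ k)) = 0 := by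
      rw [ZMod.intCast_zmod_eq_zero_iff_dvd]
      push_cast
      exact dvd_neg.mpr ((pow_dvd_pow (p:ℤ) hk).mul_right _)
    rw [C, h0]
    exact card_sq_zero' hp k
  -- tsum is a finite sum
  obtain ⟨m, hm⟩ := hr
  have hfin : ∑' k : ℕ, (C (p ^ k) (-((p : ℤ) ^ r * n₀)) : ℝ) * (p : ℝ) ^ (-(k : ℝ) * s)
      = ∑ k ∈ Finset.range (r+1), (C (p ^ k) (-((p : ℤ) ^ r * n₀)) : ℝ) * (p : ℝ) ^ (-(k : ℝ) * s) := by
    apply tsum_eq_sum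
    intro k hk
    rw [Finset.mem_range, not_lt] at hk
    rw [hCgt k (by omega)]
    simp
  have hsum : ∑' k : ℕ, (C (p ^ k) (-((p : ℤ) ^ r * n₀)) : ℝ) * (p : ℝ) ^ (-(k : ℝ) * s)
      = (1 + (p:ℝ) ^ (-s)) * ∑ j ∈ Finset.range (m+1), ((p:ℝ) ^ (1 - 2*s)) ^ j := by
    rw [hfin, ← pair_sum' (p:ℝ) s hP0 m, show 2*m+2 = r+1 from by omega]
    apply Finset.sum_congr rfl
    intro k hk
    rw [Finset.mem_range] at hk
    rw [hCle k (by omega)]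
    rw [show ((p ^ (k/2) : ℕ) : ℝ) = (p:ℝ) ^ ((k/2 : ℕ) : ℝ) from by
      rw [Real.rpow_natCast]; push_cast; ring]
    rw [← Real.rpow_add hP0]
  -- first factor
  have hF1 : ((1:ℝ) - (p:ℝ) ^ (-(2 * s))) / (1 - (p:ℝ) ^ (-s)) = 1 + (p:ℝ) ^ (-s) := by
    have h2 : (p:ℝ) ^ (-(2*s)) = (p:ℝ) ^ (-s) * (p:ℝ) ^ (-s) := by
      rw [← Real.rpow_add hP0]; congr 1; ring
    rw [h2]
    field_simp
    ring
  -- second factor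
  have hF2 : ∑ j ∈ Finset.range (m+1), ((p:ℝ) ^ (1 - 2*s)) ^ j
      = (1 - (p:ℝ) ^ ((1 - 2 * s) * ((r : ℝ) + 1) / 2)) / (1 - (p:ℝ) ^ (1 - 2*s)) := by
    rw [geom_sum_eq hq_ne1]
    rw [show ((p:ℝ) ^ (1 - 2*s)) ^ (m+1) = (p:ℝ) ^ ((1 - 2 * s) * ((r : ℝ) + 1) / 2) from by
      rw [← Real.rpow_natCast ((p:ℝ) ^ (1 - 2*s)) (m+1), ← Real.rpow_mul hP0.le]
      congr 1
      rw [hm]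
      push_cast
      ring]
    rw [div_eq_div_iff (by intro h; exact hq_ne (by linarith [sub_eq_zero.mpr (show (p:ℝ)^(1-2*s) = 1 from by linarith)])) hq_ne]
    ring
  have hmain : ∑' k : ℕ, (C (p ^ k) (-((p : ℤ) ^ r * n₀)) : ℝ) * (p : ℝ) ^ (-(k : ℝ) * s) =
      ((1 - (p : ℝ) ^ (-(2 * s))) / (1 - (p : ℝ) ^ (-s))) *
        ((1 - (p : ℝ) ^ ((1 - 2 * s) * ((r : ℝ) + 1) / 2)) / (1 - (p : ℝ) ^ (1 - 2 * s))) := by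
    rw [hsum, hF1, hF2]
  refine ⟨hmain, fun hr1 => ?_⟩
  subst hr1
  rw [hmain]
  rw [show ((1:ℝ) - 2 * s) * (((1:ℕ) : ℝ) + 1) / 2 = 1 - 2*s from by push_cast; ring]
  rw [div_self hq_ne, mul_one]
end

section
/- Let n = 3^r · n₀ with r an odd positive integer and n₀ a positive integer not divisible by 3, and let s be a real number with s > 1/2. Then Σ_{k=0}^∞ C(3^{k+1}, −n) · 3^{−ks} = 1 + (3^{1−s} + 3^{1−2s}) · ((1 − 3^{(1−2s)(r−1)/2}) / (1 − 3^{1−2s})). In particular, if r = 1 this sum equals 1. -/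
lemma pow_dvd_sq_iff (m v : ℕ) : 3 ^ m ∣ v ^ 2 ↔ 3 ^ ((m + 1) / 2) ∣ v := by
  rcases eq_or_ne v 0 with rfl | hv
  · simp
  · have hp : Nat.Prime 3 := by norm_num
    rw [hp.pow_dvd_iff_le_factorization (pow_ne_zero 2 hv),
        hp.pow_dvd_iff_le_factorization hv, Nat.factorization_pow]
    simp only [Finsupp.smul_apply, smul_eq_mul]
    omega

lemma count_sq_zero (m : ℕ) :
    Nat.card {x : ZMod (3 ^ m) // x ^ 2 = 0} = 3 ^ (m / 2) := by
  have hN : 0 < 3 ^ m := pow_pos (by norm_num) m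
  haveI : NeZero (3 ^ m) := ⟨hN.ne'⟩
  set c := (m + 1) / 2 with hc
  have hcm : c ≤ m := by omega
  have key : ∀ x : ZMod (3 ^ m), x ^ 2 = 0 ↔ 3 ^ c ∣ x.val := by
    intro x
    rw [← pow_dvd_sq_iff]
    constructor
    · intro h
      have h2 : ((x.val ^ 2 : ℕ) : ZMod (3 ^ m)) = 0 := by
        push_cast
        rw [ZMod.natCast_val, ZMod.cast_id]
        exact h
      exact (ZMod.natCast_eq_zero_iff _ _).mp h2
    · intro h
      have h2 : ((x.val ^ 2 : ℕ) : ZMod (3 ^ m)) = 0 :=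
        (ZMod.natCast_eq_zero_iff _ _).mpr h
      rwa [Nat.cast_pow, ZMod.natCast_val, ZMod.cast_id] at h2
  rw [Nat.card_eq_fintype_card, Fintype.card_subtype]
  have h1 : (Finset.univ.filter fun x : ZMod (3 ^ m) => x ^ 2 = 0).card
      = ((Finset.range (3 ^ m)).filter fun v => 3 ^ c ∣ v).card := by
    apply Finset.card_nbij (i := ZMod.val)
    · intro x hx
      simp only [Finset.mem_coe, Finset.mem_filter, Finset.mem_univ, true_and] at hx
      exact Finset.mem_filter.mpr ⟨Finset.mem_range.mpr (ZMod.val_lt x), (key x).mp hx⟩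
    · intro x _ y _ h
      exact ZMod.val_injective _ h
    · intro v hv
      simp only [Finset.coe_filter, Set.mem_setOf_eq, Finset.mem_range] at hv
      refine ⟨(v : ZMod (3 ^ m)), ?_, ZMod.val_cast_of_lt hv.1⟩
      simp only [Finset.coe_filter, Set.mem_setOf_eq, Finset.mem_univ, true_and]
      rw [key, ZMod.val_cast_of_lt hv.1]
      exact hv.2
  rw [h1]
  have h2 : (Finset.range (3 ^ m)).filter (fun v => 3 ^ c ∣ v)
      = (Finset.range (3 ^ (m - c))).image (fun i => 3 ^ c * i) := by
    ext v
    simp only [Finset.mem_filter, Finset.mem_range, Finset.mem_image]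
    constructor
    · rintro ⟨hlt, w, rfl⟩
      refine ⟨w, ?_, rfl⟩
      have hlt' : 3 ^ c * w < 3 ^ c * 3 ^ (m - c) := by
        rwa [← pow_add, Nat.add_sub_cancel' hcm]
      exact lt_of_mul_lt_mul_left hlt' (Nat.zero_le _)
    · rintro ⟨w, hw, rfl⟩
      refine ⟨?_, ⟨w, rfl⟩⟩
      calc 3 ^ c * w < 3 ^ c * 3 ^ (m - c) :=
            (mul_lt_mul_iff_right₀ (pow_pos (by norm_num : (0:ℕ)<3) c)).mpr hw
        _ = 3 ^ m := by rw [← pow_add, Nat.add_sub_cancel' hcm]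
  rw [h2, Finset.card_image_of_injective _ (mul_right_injective₀ (pow_ne_zero c (by norm_num))),
    Finset.card_range]
  congr 1
  omega

lemma C_eq_of_le (r n₀ m : ℕ) (hm : m ≤ r) :
    C (3 ^ m) (-((3 : ℤ) ^ r * n₀)) = 3 ^ (m / 2) := by
  have h0 : (((-((3 : ℤ) ^ r * n₀)) : ℤ) : ZMod (3 ^ m)) = 0 := by
    rw [ZMod.intCast_zmod_eq_zero_iff_dvd]
    push_cast
    exact dvd_neg.mpr ((pow_dvd_pow (3:ℤ) hm).mul_right _)
  unfold C
  rw [h0]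
  exact count_sq_zero m

lemma C_eq_zero (r n₀ : ℕ) (hr : Odd r) (h3 : ¬ 3 ∣ n₀) (m : ℕ) (hm : r < m) :
    C (3 ^ m) (-((3 : ℤ) ^ r * n₀)) = 0 := by
  rw [C, Nat.card_eq_zero]
  left
  constructor
  rintro ⟨x, hx⟩
  have hN : 0 < 3 ^ m := pow_pos (by norm_num) m
  haveI : NeZero (3 ^ m) := ⟨hN.ne'⟩
  have h0 : (((x.val : ℤ) ^ 2 + 3 ^ r * n₀ : ℤ) : ZMod (3 ^ m)) = 0 := by
    push_cast
    rw [ZMod.natCast_val, ZMod.cast_id, hx]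
    push_cast
    ring
  rw [ZMod.intCast_zmod_eq_zero_iff_dvd] at h0
  have hdvd : (3 : ℤ) ^ (r + 1) ∣ (x.val : ℤ) ^ 2 + 3 ^ r * n₀ := by
    refine dvd_trans ?_ h0
    push_cast
    exact pow_dvd_pow 3 hm
  have hr2 : (3 : ℤ) ^ r ∣ (x.val : ℤ) ^ 2 := by
    have h1 : (3 : ℤ) ^ r ∣ (x.val : ℤ) ^ 2 + 3 ^ r * n₀ :=
      dvd_trans (pow_dvd_pow 3 (Nat.le_succ r)) hdvd
    have h2 : (3 : ℤ) ^ r ∣ (3 : ℤ) ^ r * n₀ := Dvd.intro _ rfl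
    have := dvd_sub h1 h2
    simpa using this
  have hr2' : 3 ^ r ∣ x.val ^ 2 := by exact_mod_cast hr2
  have hv : 3 ^ ((r + 1) / 2) ∣ x.val := (pow_dvd_sq_iff r _).mp hr2'
  have hsq : 3 ^ (r + 1) ∣ x.val ^ 2 := by
    obtain ⟨w, hw⟩ := hv
    obtain ⟨t, ht⟩ := hr
    subst ht
    rw [hw]
    rw [mul_pow, ← pow_mul]
    have : (2 * t + 1 + 1) / 2 * 2 = 2 * t + 1 + 1 := by omega
    rw [this]
    exact Dvd.dvd.mul_right dvd_rfl _
  have hfin : (3 : ℤ) ^ (r + 1) ∣ 3 ^ r * n₀ := by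
    have hsq' : (3 : ℤ) ^ (r + 1) ∣ (x.val : ℤ) ^ 2 := by exact_mod_cast hsq
    have := dvd_sub hdvd hsq'
    simpa using this
  have hfin' : 3 ^ (r + 1) ∣ 3 ^ r * n₀ := by exact_mod_cast hfin
  rw [pow_succ] at hfin'
  have : 3 ∣ n₀ := (mul_dvd_mul_iff_left (pow_ne_zero r (by norm_num : (3:ℕ) ≠ 0))).mp hfin'
  exact h3 this

lemma sum_aux (s : ℝ) (t : ℕ) :
    ∑ k ∈ Finset.range (2 * t + 1), ((3:ℝ) ^ ((k + 1) / 2) * (3:ℝ) ^ (-(k:ℝ) * s))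
      = 1 + ∑ j ∈ Finset.range t,
          (((3:ℝ) ^ ((1:ℝ) - s) + (3:ℝ) ^ ((1:ℝ) - 2 * s)) * ((3:ℝ) ^ ((1:ℝ) - 2 * s)) ^ j) := by
  have h3 : (0:ℝ) < 3 := by norm_num
  have P : ∀ a b : ℝ, (3:ℝ) ^ a * (3:ℝ) ^ b = (3:ℝ) ^ (a + b) :=
    fun a b => (Real.rpow_add h3 a b).symm
  induction t with
  | zero => simp
  | succ t ih =>
    have e1 : 2 * (t + 1) + 1 = (2 * t + 1) + 1 + 1 := by ring
    rw [e1, Finset.sum_range_succ, Finset.sum_range_succ, ih, Finset.sum_range_succ]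
    have key : (3:ℝ) ^ ((2 * t + 1 + 1) / 2) * (3:ℝ) ^ (-((2 * t + 1 : ℕ) : ℝ) * s)
        + (3:ℝ) ^ ((2 * t + 1 + 1 + 1) / 2) * (3:ℝ) ^ (-((2 * t + 1 + 1 : ℕ) : ℝ) * s)
        = ((3:ℝ) ^ ((1:ℝ) - s) + (3:ℝ) ^ ((1:ℝ) - 2 * s)) * ((3:ℝ) ^ ((1:ℝ) - 2 * s)) ^ t := by
      have hd1 : (2 * t + 1 + 1) / 2 = t + 1 := by omega
      have hd2 : (2 * t + 1 + 1 + 1) / 2 = t + 1 := by omega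
      rw [hd1, hd2]
      have hnat : ∀ n : ℕ, (3:ℝ) ^ n = (3:ℝ) ^ (n : ℝ) := fun n => (Real.rpow_natCast 3 n).symm
      have hq : ((3:ℝ) ^ ((1:ℝ) - 2 * s)) ^ t = (3:ℝ) ^ (((1:ℝ) - 2 * s) * t) := by
        rw [← Real.rpow_natCast ((3:ℝ) ^ ((1:ℝ) - 2 * s)) t, ← Real.rpow_mul h3.le]
      rw [hnat (t + 1), hq, P, P, add_mul, P, P]
      congr 2 <;> push_cast <;> ring
    linarith [key]

theorem stmt_14 (r : ℕ) (hr : Odd r) (hrpos : 0 < r) (n₀ : ℕ) (hn₀ : 0 < n₀)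
    (h3n₀ : ¬ 3 ∣ n₀) (s : ℝ) (hs : 1 / 2 < s) :
    (∑' k : ℕ, (C (3 ^ (k + 1)) (-((3 : ℤ) ^ r * n₀)) : ℝ) * (3 : ℝ) ^ (-(k : ℝ) * s) =
      1 + ((3 : ℝ) ^ (1 - s) + (3 : ℝ) ^ (1 - 2 * s)) *
        ((1 - (3 : ℝ) ^ ((1 - 2 * s) * ((r : ℝ) - 1) / 2)) / (1 - (3 : ℝ) ^ (1 - 2 * s)))) ∧
    (r = 1 →
      ∑' k : ℕ, (C (3 ^ (k + 1)) (-((3 : ℤ) ^ r * n₀)) : ℝ) * (3 : ℝ) ^ (-(k : ℝ) * s) = 1) := by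
  have h3 : (0:ℝ) < 3 := by norm_num
  have hfirst : ∑' k : ℕ, (C (3 ^ (k + 1)) (-((3 : ℤ) ^ r * n₀)) : ℝ) * (3 : ℝ) ^ (-(k : ℝ) * s) =
      1 + ((3 : ℝ) ^ (1 - s) + (3 : ℝ) ^ (1 - 2 * s)) *
        ((1 - (3 : ℝ) ^ ((1 - 2 * s) * ((r : ℝ) - 1) / 2)) / (1 - (3 : ℝ) ^ (1 - 2 * s))) := by
    obtain ⟨t, ht⟩ := hr
    subst ht
    rw [tsum_eq_sum (s := Finset.range (2 * t + 1))
      (fun k hk => by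
        rw [C_eq_zero (2 * t + 1) n₀ ⟨t, rfl⟩ h3n₀ (k + 1)
          (by simpa using Finset.mem_range.not.mp hk |> fun h => by omega)]
        simp)]
    have hsum : ∑ k ∈ Finset.range (2 * t + 1),
        (C (3 ^ (k + 1)) (-((3 : ℤ) ^ (2 * t + 1) * n₀)) : ℝ) * (3 : ℝ) ^ (-(k : ℝ) * s)
        = ∑ k ∈ Finset.range (2 * t + 1), ((3:ℝ) ^ ((k + 1) / 2) * (3:ℝ) ^ (-(k:ℝ) * s)) := by
      refine Finset.sum_congr rfl (fun k hk => ?_)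
      rw [C_eq_of_le (2 * t + 1) n₀ (k + 1)
        (by have := Finset.mem_range.mp hk; omega)]
      push_cast
      ring
    rw [hsum, sum_aux]
    congr 1
    have hexp : (1 - 2 * s) * (((2 * t + 1 : ℕ) : ℝ) - 1) / 2 = ((1:ℝ) - 2 * s) * (t : ℝ) := by
      push_cast; ring
    rw [hexp, Real.rpow_mul h3.le, Real.rpow_natCast]
    have hq1 : (3:ℝ) ^ ((1:ℝ) - 2 * s) < 1 :=
      Real.rpow_lt_one_of_one_lt_of_neg (by norm_num) (by linarith)
    rw [← Finset.mul_sum, geom_sum_eq (ne_of_lt hq1) t]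
    congr 1
    rw [← neg_div_neg_eq, neg_sub, neg_sub]
  refine ⟨hfirst, fun hr1 => ?_⟩
  subst hr1
  rw [hfirst]
  norm_num
end

section
/- Let n = 3^r · n₀ with r an even positive integer and n₀ a positive integer not divisible by 3, and let s be a real number with s > 1/2. Then Σ_{k=0}^∞ C(3^{k+1}, −n) · 3^{−ks} = (1 + 3^{1−s}) · ((1 − 3^{(1−2s)·r/2}) / (1 − 3^{1−2s})) + 3^{r/2 − rs} · Σ_{k=0}^∞ C(3^{k+1}, −n₀) · 3^{−ks}. -/
lemma pow_dvd_of_sq (p m a : ℕ) (hp : p.Prime) (ha : a ≠ 0) (h : p ^ m ∣ a ^ 2) :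
    p ^ ((m + 1) / 2) ∣ a := by
  rw [hp.pow_dvd_iff_le_factorization (pow_ne_zero 2 ha)] at h
  rw [hp.pow_dvd_iff_le_factorization ha]
  rw [Nat.factorization_pow] at h
  simp at h
  omega



lemma C_congr (m : ℕ) (n n' : ℤ) (h : (n : ZMod m) = (n' : ZMod m)) : C m n = C m n' := by
  unfold C; rw [h]

lemma C_zero (m : ℕ) : C (3 ^ m) 0 = 3 ^ (m / 2) := by
  have h3 : (3 : ℕ).Prime := by norm_num
  unfold C
  have hne : NeZero (3 ^ m) := ⟨by positivity⟩
  rw [← Nat.card_eq_of_bijective (fun y : ZMod (3 ^ (m / 2)) =>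
    (⟨((3 ^ (m - m / 2) * y.val : ℕ) : ZMod (3 ^ m)), by
      push_cast
      rw [mul_pow, ← pow_mul]
      have : ((3 ^ ((m - m/2) * 2) : ℕ) : ZMod (3^m)) = 0 := by
        rw [ZMod.natCast_eq_zero_iff]
        exact pow_dvd_pow 3 (by omega)
      push_cast at this
      rw [this, zero_mul]⟩ : {x : ZMod (3 ^ m) // x ^ 2 = ((0 : ℤ) : ZMod (3 ^ m))}))
    ?_, Nat.card_zmod]
  constructor
  · intro a b hab
    have hma : NeZero (3 ^ (m / 2)) := ⟨by positivity⟩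
    simp only [Subtype.mk.injEq] at hab
    have hlt : ∀ y : ZMod (3 ^ (m / 2)), 3 ^ (m - m / 2) * y.val < 3 ^ m := by
      intro y
      calc 3 ^ (m - m / 2) * y.val < 3 ^ (m - m / 2) * 3 ^ (m / 2) := by
            exact (Nat.mul_lt_mul_left (by positivity)).mpr y.val_lt
        _ = 3 ^ m := by rw [← pow_add]; congr 1; omega
    have := congrArg ZMod.val hab
    rw [ZMod.val_cast_of_lt (hlt a), ZMod.val_cast_of_lt (hlt b)] at this
    have hv : a.val = b.val := Nat.eq_of_mul_eq_mul_left (by positivity) this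
    exact ZMod.val_injective _ hv
  · rintro ⟨x, hx⟩
    simp only [Int.cast_zero] at hx
    by_cases hx0 : x = 0
    · refine ⟨0, ?_⟩
      ext
      simp [hx0]
    · have hdvd : (3 : ℕ) ^ m ∣ x.val ^ 2 := by
        have : ((x.val ^ 2 : ℕ) : ZMod (3 ^ m)) = 0 := by
          push_cast
          rw [ZMod.natCast_val, ZMod.cast_id, hx]
        rwa [ZMod.natCast_eq_zero_iff] at this
      have hvne : x.val ≠ 0 := fun h => hx0 ((ZMod.val_eq_zero x).mp h)
      have := pow_dvd_of_sq 3 m x.val h3 hvne hdvd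
      obtain ⟨b, hb⟩ := this
      have hble : b < 3 ^ (m / 2) := by
        by_contra hb'
        push_neg at hb'
        have : 3 ^ m ≤ x.val := by
          calc (3:ℕ) ^ m = 3 ^ ((m+1)/2) * 3 ^ (m/2) := by rw [← pow_add]; congr 1; omega
            _ ≤ 3 ^ ((m+1)/2) * b := Nat.mul_le_mul_left _ hb'
            _ = x.val := hb.symm
        exact absurd x.val_lt (by omega)
      refine ⟨(b : ZMod (3 ^ (m / 2))), ?_⟩
      ext
      simp only
      rw [ZMod.val_cast_of_lt hble]
      have : (3:ℕ) ^ (m - m/2) = 3 ^ ((m+1)/2) := by congr 1; omega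
      rw [this, ← hb, ZMod.natCast_val, ZMod.cast_id]



lemma C_shift (m t n₀ : ℕ) (hm : 1 ≤ m) (h3 : ¬ 3 ∣ n₀) :
    C (3 ^ (m + 2 * t)) (-((3:ℤ) ^ (2 * t) * n₀)) = 3 ^ t * C (3 ^ m) (-(n₀:ℤ)) := by
  have h3p : (3 : ℕ).Prime := by norm_num
  set r := 2 * t with hrt
  set M := 3 ^ (m + r) with hM
  have hMne : NeZero M := ⟨by positivity⟩
  have hmne : NeZero (3 ^ m) := ⟨by positivity⟩
  have htne : NeZero (3 ^ t) := ⟨by positivity⟩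
  unfold C
  conv_rhs => rw [← Nat.card_zmod (3 ^ t)]
  rw [← Nat.card_prod]
  refine (Nat.card_eq_of_bijective (fun p : ZMod (3 ^ t) × {y : ZMod (3 ^ m) // y ^ 2 = (((-(n₀:ℤ)) : ℤ) : ZMod (3 ^ m))} =>
    (⟨((3 ^ t * (p.2.1.val + 3 ^ m * p.1.val) : ℕ) : ZMod M), by
      obtain ⟨z, y⟩ := p
      -- y.prop : y.1 ^ 2 = -(n₀)
      have hy' : ((3:ℤ) ^ m) ∣ ((y.1.val : ℤ) ^ 2 + n₀) := by
        have : (((y.1.val : ℤ) ^ 2 + n₀ : ℤ) : ZMod (3 ^ m)) = 0 := by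
          push_cast
          rw [ZMod.natCast_val, ZMod.cast_id, y.2]
          push_cast
          ring
        rw [ZMod.intCast_zmod_eq_zero_iff_dvd] at this
        exact_mod_cast this
      set w : ℕ := y.1.val + 3 ^ m * z.val with hw
      have key : ((3:ℤ) ^ (m + r)) ∣ ((3 ^ t * w : ℕ) : ℤ) ^ 2 + 3 ^ r * n₀ := by
        have h1 : ((3 ^ t * w : ℕ) : ℤ) ^ 2 + 3 ^ r * n₀
            = 3 ^ r * (((y.1.val:ℤ) ^ 2 + n₀) + 3 ^ m * (2 * y.1.val * z.val + 3 ^ m * z.val ^ 2)) := by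
          push_cast [hw, hrt]
          ring
        rw [h1, add_comm m r, pow_add]
        exact mul_dvd_mul_left _ (dvd_add hy' (dvd_mul_right _ _))
      show _ = _
      have : (((3 ^ t * w : ℕ):ℤ) : ZMod M) ^ 2 = (((-((3:ℤ) ^ r * n₀)) : ℤ) : ZMod M) := by
        have h0 : ((((3 ^ t * w : ℕ) : ℤ) ^ 2 + 3 ^ r * n₀ : ℤ) : ZMod M) = 0 := by
          rw [ZMod.intCast_zmod_eq_zero_iff_dvd]
          have : ((M : ℕ) : ℤ) = (3:ℤ) ^ (m + r) := by push_cast [hM]; ring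
          rw [this]
          exact key
        push_cast at h0 ⊢
        linear_combination h0
      exact_mod_cast this⟩ :
      {x : ZMod M // x ^ 2 = (((-((3:ℤ) ^ r * n₀)) : ℤ) : ZMod M)})) ⟨?_, ?_⟩).symm
  · -- injective
    rintro ⟨z, y⟩ ⟨z', y'⟩ hab
    simp only [Subtype.mk.injEq] at hab
    have hlt : ∀ (z : ZMod (3^t)) (y : ZMod (3^m)), 3 ^ t * (y.val + 3 ^ m * z.val) < M := by
      intro z y
      have h1 : y.val + 3 ^ m * z.val < 3 ^ (m + t) := by
        have hy := y.val_lt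
        have hz := z.val_lt
        have e1 : (3:ℕ) ^ m * (z.val + 1) ≤ 3 ^ m * 3 ^ t := Nat.mul_le_mul_left _ (by omega)
        have e2 : (3:ℕ) ^ m * (z.val + 1) = 3 ^ m * z.val + 3 ^ m := by ring
        rw [pow_add]
        omega
      calc 3 ^ t * (y.val + 3 ^ m * z.val) < 3 ^ t * 3 ^ (m + t) :=
            (Nat.mul_lt_mul_left (by positivity)).mpr h1
        _ = M := by rw [hM, ← pow_add]; congr 1; omega
    have := congrArg ZMod.val hab
    rw [ZMod.val_cast_of_lt (hlt z y), ZMod.val_cast_of_lt (hlt z' y')] at this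
    have h2 : y.1.val + 3 ^ m * z.val = y'.1.val + 3 ^ m * z'.val :=
      Nat.eq_of_mul_eq_mul_left (by positivity) this
    have hyv : y.1.val = y'.1.val := by
      have e1 := congrArg (· % 3 ^ m) h2
      simpa [Nat.add_mul_mod_self_left, Nat.mod_eq_of_lt y.1.val_lt,
        Nat.mod_eq_of_lt y'.1.val_lt] using e1
    have hzv : z.val = z'.val := by
      have : 3 ^ m * z.val = 3 ^ m * z'.val := by omega
      exact Nat.eq_of_mul_eq_mul_left (by positivity) this
    exact Prod.ext (ZMod.val_injective _ hzv) (Subtype.ext (ZMod.val_injective _ hyv))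
  · -- surjective
    rintro ⟨x, hx⟩
    set a := x.val with ha
    have hdvd : ((3:ℤ) ^ (m + r)) ∣ ((a : ℤ) ^ 2 + 3 ^ r * n₀) := by
      have : (((a:ℤ) ^ 2 + 3 ^ r * n₀ : ℤ) : ZMod M) = 0 := by
        push_cast
        rw [ZMod.natCast_val, ZMod.cast_id, hx]
        push_cast
        ring
      rw [ZMod.intCast_zmod_eq_zero_iff_dvd] at this
      have hMc : ((M : ℕ) : ℤ) = (3:ℤ) ^ (m + r) := by push_cast [hM]; ring
      rwa [hMc] at this
    have ha0 : a ≠ 0 := by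
      intro h0
      rw [h0] at hdvd
      push_cast at hdvd
      have : ((3:ℤ) ^ (m + r)) ∣ 3 ^ r * n₀ := by simpa using hdvd
      have h3m : ((3:ℤ) ^ m) ∣ (n₀ : ℤ) := by
        have h4 : (3:ℤ) ^ r * 3 ^ m ∣ 3 ^ r * (n₀ : ℤ) := by
          rw [← pow_add]
          rwa [add_comm m r] at this
        exact (mul_dvd_mul_iff_left (pow_ne_zero r (by norm_num : (3:ℤ) ≠ 0))).mp h4
      have : (3:ℤ) ∣ (n₀:ℤ) := dvd_trans (dvd_pow_self 3 (by omega)) h3m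
      exact h3 (by exact_mod_cast this)
    have hra : (3:ℕ) ^ r ∣ a ^ 2 := by
      have : ((3:ℤ) ^ r) ∣ (a:ℤ) ^ 2 := by
        have h1 : ((3:ℤ) ^ r) ∣ ((a : ℤ) ^ 2 + 3 ^ r * n₀) :=
          dvd_trans (pow_dvd_pow 3 (by omega)) hdvd
        have h2 : ((3:ℤ) ^ r) ∣ (3:ℤ) ^ r * n₀ := Dvd.intro _ rfl
        simpa using h1.sub h2
      exact_mod_cast this
    have hta : (3:ℕ) ^ t ∣ a := by
      have := pow_dvd_of_sq 3 r a (by norm_num) ha0 hra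
      have ht : (r + 1) / 2 = t := by omega
      rwa [ht] at this
    obtain ⟨w, hwa⟩ := hta
    have hwlt : w < 3 ^ (m + t) := by
      have hxl : a < 3 ^ (m + r) := x.val_lt
      by_contra hw'
      push_neg at hw'
      have : 3 ^ (m + r) ≤ a := by
        calc (3:ℕ) ^ (m + r) = 3 ^ t * 3 ^ (m + t) := by rw [← pow_add]; congr 1; omega
          _ ≤ 3 ^ t * w := Nat.mul_le_mul_left _ hw'
          _ = a := hwa.symm
      omega
    have hmw : ((3:ℤ) ^ m) ∣ ((w:ℤ) ^ 2 + n₀) := by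
      have h1 : ((3:ℤ) ^ (m + r)) ∣ 3 ^ r * ((w:ℤ) ^ 2 + n₀) := by
        have : (a:ℤ) ^ 2 + 3 ^ r * n₀ = 3 ^ r * ((w:ℤ)^2 + n₀) := by
          push_cast [hwa, hrt]; ring
        rwa [this] at hdvd
      rw [add_comm m r, pow_add] at h1
      exact (mul_dvd_mul_iff_left (pow_ne_zero r (by norm_num : (3:ℤ) ≠ 0))).mp h1
    have hy2 : ((w : ℕ) : ZMod (3^m)) ^ 2 = (((-(n₀:ℤ)) : ℤ) : ZMod (3 ^ m)) := by
      have h0 : (((w:ℤ) ^ 2 + n₀ : ℤ) : ZMod (3^m)) = 0 := by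
        rw [ZMod.intCast_zmod_eq_zero_iff_dvd]
        have : (((3^m : ℕ) : ℤ)) = (3:ℤ)^m := by push_cast; ring
        rwa [this]
      push_cast at h0 ⊢
      linear_combination h0
    refine ⟨⟨((w / 3 ^ m : ℕ) : ZMod (3 ^ t)), ⟨((w : ℕ) : ZMod (3 ^ m)), hy2⟩⟩, ?_⟩
    apply Subtype.ext
    show ((3 ^ t * (_ + 3 ^ m * _) : ℕ) : ZMod M) = x
    have hv1 : (((w:ℕ) : ZMod (3^m))).val = w % 3 ^ m := ZMod.val_natCast _ w
    have hv2 : (((w / 3 ^ m : ℕ) : ZMod (3 ^ t))).val = w / 3 ^ m := by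
      rw [ZMod.val_natCast]
      apply Nat.mod_eq_of_lt
      apply Nat.div_lt_of_lt_mul
      rwa [← pow_add]
    rw [hv1, hv2, Nat.mod_add_div, ← hwa, ZMod.natCast_val, ZMod.cast_id]


lemma C_le_two (m n₀ : ℕ) (hm : 1 ≤ m) (h3 : ¬ 3 ∣ n₀) : C (3 ^ m) (-(n₀:ℤ)) ≤ 2 := by
  have hmne : NeZero (3 ^ m) := ⟨by positivity⟩
  have hp : Prime (3 : ℤ) := Int.prime_three
  -- key dichotomy
  have key : ∀ x y : ZMod (3 ^ m), x ^ 2 = ((-(n₀:ℤ) : ℤ) : ZMod (3 ^ m)) →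
      y ^ 2 = ((-(n₀:ℤ) : ℤ) : ZMod (3 ^ m)) → y = x ∨ y = -x := by
    intro x y hx hy
    have hdvd : ((3:ℤ) ^ m) ∣ ((y.val : ℤ) - x.val) * ((y.val : ℤ) + x.val) := by
      have : (((y.val : ℤ) ^ 2 - (x.val:ℤ) ^ 2 : ℤ) : ZMod (3 ^ m)) = 0 := by
        push_cast
        rw [ZMod.natCast_val, ZMod.natCast_val, ZMod.cast_id, ZMod.cast_id, hx, hy]
        ring
      rw [ZMod.intCast_zmod_eq_zero_iff_dvd] at this
      have h2 : (((3:ℕ) ^ m : ℕ) : ℤ) = (3:ℤ) ^ m := by push_cast; ring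
      rw [h2] at this
      have h3' : ((y.val : ℤ) ^ 2 - (x.val:ℤ) ^ 2) = ((y.val : ℤ) - x.val) * ((y.val : ℤ) + x.val) := by ring
      rwa [h3'] at this
    have hxunit : ¬ (3:ℤ) ∣ (x.val : ℤ) := by
      intro hd
      apply h3
      have h1 : ((3:ℤ)) ∣ ((x.val:ℤ)^2 + n₀) := by
        have : (((x.val:ℤ)^2 + n₀ : ℤ) : ZMod (3^m)) = 0 := by
          push_cast
          rw [ZMod.natCast_val, ZMod.cast_id, hx]
          push_cast; ring
        rw [ZMod.intCast_zmod_eq_zero_iff_dvd] at this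
        refine dvd_trans ?_ this
        push_cast
        exact dvd_pow_self 3 (by omega)
      have : (3:ℤ) ∣ (n₀:ℤ) := by
        have := h1.sub (Dvd.dvd.mul_right (hd) (x.val:ℤ))
        simpa [sq] using (by
          have h2 : ((x.val:ℤ)^2 + n₀) - (x.val:ℤ) * (x.val:ℤ) = n₀ := by ring
          have h4 : (3:ℤ) ∣ (x.val:ℤ) * (x.val:ℤ) := hd.mul_right _
          have := h1.sub h4
          rwa [h2] at this)
      exact_mod_cast this
    -- 3 cannot divide both y-x and y+x
    have hcase : ¬ (3:ℤ) ∣ ((y.val : ℤ) - x.val) ∨ ¬ (3:ℤ) ∣ ((y.val : ℤ) + x.val) := by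
      by_contra hc
      push_neg at hc
      obtain ⟨h1, h2⟩ := hc
      have h5 : (3:ℤ) ∣ 2 * x.val := by
        have h6 := h2.sub h1
        have e : ((y.val : ℤ) + x.val) - ((y.val : ℤ) - x.val) = 2 * x.val := by ring
        rwa [e] at h6
      rcases hp.dvd_mul.mp h5 with h | h
      · norm_num at h
      · exact hxunit h
    rcases hcase with h | h
    · -- coprime to y - x, so 3^m ∣ y + x, giving y = -x
      right
      have hcop : IsCoprime ((3:ℤ)^m) ((y.val : ℤ) - x.val) :=
        IsCoprime.pow_left (hp.coprime_iff_not_dvd.mpr h)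
      have := hcop.dvd_of_dvd_mul_left hdvd
      have h0 : (((y.val : ℤ) + x.val : ℤ) : ZMod (3^m)) = 0 := by
        rw [ZMod.intCast_zmod_eq_zero_iff_dvd]
        exact_mod_cast this
      push_cast at h0
      rw [ZMod.natCast_val, ZMod.natCast_val, ZMod.cast_id, ZMod.cast_id] at h0
      exact eq_neg_of_add_eq_zero_left h0
    · left
      have hcop : IsCoprime ((3:ℤ)^m) ((y.val : ℤ) + x.val) :=
        IsCoprime.pow_left (hp.coprime_iff_not_dvd.mpr h)
      have := hcop.dvd_of_dvd_mul_right hdvd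
      have h0 : (((y.val : ℤ) - x.val : ℤ) : ZMod (3^m)) = 0 := by
        rw [ZMod.intCast_zmod_eq_zero_iff_dvd]
        exact_mod_cast this
      push_cast at h0
      rw [ZMod.natCast_val, ZMod.natCast_val, ZMod.cast_id, ZMod.cast_id] at h0
      exact sub_eq_zero.mp h0
  unfold C
  by_cases hne : Nonempty {x : ZMod (3^m) // x ^ 2 = ((-(n₀:ℤ) : ℤ) : ZMod (3^m))}
  · obtain ⟨x₀⟩ := hne
    have hinj : Function.Injective
        (fun y : {x : ZMod (3^m) // x ^ 2 = ((-(n₀:ℤ) : ℤ) : ZMod (3^m))} => (decide (y.1 = x₀.1))) := by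
      intro a b hab
      simp only at hab
      by_cases ha' : a.1 = x₀.1 <;> by_cases hb' : b.1 = x₀.1
      · exact Subtype.ext (ha'.trans hb'.symm)
      · simp [ha', hb'] at hab
      · simp [ha', hb'] at hab
      · have ha2 := (key x₀.1 a.1 x₀.2 a.2).resolve_left ha'
        have hb2 := (key x₀.1 b.1 x₀.2 b.2).resolve_left hb'
        exact Subtype.ext (ha2.trans hb2.symm)
    calc Nat.card {x : ZMod (3^m) // x ^ 2 = ((-(n₀:ℤ) : ℤ) : ZMod (3^m))}
        ≤ Nat.card Bool := Nat.card_le_card_of_injective _ hinj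
      _ = 2 := by simp [Nat.card_eq_fintype_card]
  · rw [not_nonempty_iff] at hne
    rw [Nat.card_of_isEmpty]
    omega

lemma finite_sum_lemma (s : ℝ) (N : ℕ) :
    ∑ k ∈ Finset.range (2 * N), ((3:ℝ) ^ ((k+1)/2) * (3:ℝ) ^ (-(k:ℝ) * s)) =
      (1 + (3:ℝ) ^ (1 - s)) * ∑ i ∈ Finset.range N, ((3:ℝ) ^ (1 - 2*s)) ^ i := by
  have h3R : (0:ℝ) < 3 := by norm_num
  induction N with
  | zero => simp
  | succ N ih =>
    have e1 : 2 * (N + 1) = (2 * N) + 1 + 1 := by ring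
    rw [e1, Finset.sum_range_succ, Finset.sum_range_succ, ih, Finset.sum_range_succ]
    have hfloor1 : (2 * N + 1) / 2 = N := by omega
    have hfloor2 : (2 * N + 1 + 1) / 2 = N + 1 := by omega
    rw [hfloor1, hfloor2]
    have hxN : ((3:ℝ) ^ (1 - 2*s)) ^ N = (3:ℝ) ^ ((1 - 2*s) * N) := by
      rw [← Real.rpow_natCast ((3:ℝ) ^ (1 - 2*s)) N, ← Real.rpow_mul (le_of_lt h3R)]
    -- term 1 : 3^N * 3^(-(2N)s) = x^N
    have ht1 : (3:ℝ) ^ N * (3:ℝ) ^ (-((2 * N : ℕ):ℝ) * s) = (3:ℝ) ^ ((1 - 2*s) * N) := by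
      rw [← Real.rpow_natCast 3 N, ← Real.rpow_add h3R]
      congr 1
      push_cast
      ring
    have ht2 : (3:ℝ) ^ (N+1) * (3:ℝ) ^ (-((2 * N + 1 : ℕ):ℝ) * s)
        = (3:ℝ) ^ (1 - s) * (3:ℝ) ^ ((1 - 2*s) * N) := by
      rw [← Real.rpow_natCast 3 (N+1), ← Real.rpow_add h3R, ← Real.rpow_add h3R]
      congr 1
      push_cast
      ring
    rw [ht1, ht2, hxN]
    ring


theorem stmt_15 (r : ℕ) (hr : Even r) (hrpos : 0 < r) (n₀ : ℕ) (hn₀ : 0 < n₀)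
    (h3n₀ : ¬ 3 ∣ n₀) (s : ℝ) (hs : 1 / 2 < s) :
    ∑' k : ℕ, (C (3 ^ (k + 1)) (-((3 : ℤ) ^ r * n₀)) : ℝ) * (3 : ℝ) ^ (-(k : ℝ) * s) =
      (1 + (3 : ℝ) ^ (1 - s)) *
        ((1 - (3 : ℝ) ^ ((1 - 2 * s) * (r : ℝ) / 2)) / (1 - (3 : ℝ) ^ (1 - 2 * s))) +
      (3 : ℝ) ^ ((r : ℝ) / 2 - (r : ℝ) * s) *
        ∑' k : ℕ, (C (3 ^ (k + 1)) (-(n₀ : ℤ)) : ℝ) * (3 : ℝ) ^ (-(k : ℝ) * s) := by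
  obtain ⟨t, ht⟩ := hr
  have ht2 : r = 2 * t := by omega
  have htpos : 1 ≤ t := by omega
  have h3R : (0:ℝ) < 3 := by norm_num
  have hrR : (r : ℝ) = 2 * t := by rw [ht2]; push_cast; ring
  -- abbreviations
  set F : ℕ → ℝ := fun k => (C (3 ^ (k + 1)) (-((3 : ℤ) ^ r * n₀)) : ℝ) * (3 : ℝ) ^ (-(k : ℝ) * s)
    with hF
  set G : ℕ → ℝ := fun k => (C (3 ^ (k + 1)) (-(n₀ : ℤ)) : ℝ) * (3 : ℝ) ^ (-(k : ℝ) * s) with hG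
  -- small k values
  have hsmall : ∀ k, k < r → C (3 ^ (k + 1)) (-((3 : ℤ) ^ r * n₀)) = 3 ^ ((k+1)/2) := by
    intro k hk
    have h0 : ((-((3 : ℤ) ^ r * n₀) : ℤ) : ZMod (3 ^ (k+1))) = ((0:ℤ) : ZMod (3 ^ (k+1))) := by
      rw [Int.cast_zero, ZMod.intCast_zmod_eq_zero_iff_dvd, dvd_neg]
      exact Dvd.dvd.mul_right (by exact_mod_cast pow_dvd_pow (3:ℤ) (by omega)) _
    rw [C_congr _ _ _ h0, C_zero]
  -- big k values
  have hbig : ∀ i : ℕ, C (3 ^ ((i + r) + 1)) (-((3 : ℤ) ^ r * n₀)) =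
      3 ^ t * C (3 ^ (i+1)) (-(n₀:ℤ)) := by
    intro i
    have e : (i + r) + 1 = (i + 1) + 2 * t := by omega
    rw [e, ht2]
    exact C_shift (i+1) t n₀ (by omega) h3n₀
  -- C bound
  have hCle : ∀ k : ℕ, (C (3 ^ (k + 1)) (-(n₀:ℤ)) : ℝ) ≤ 2 := by
    intro k
    exact_mod_cast C_le_two (k+1) n₀ (by omega) h3n₀
  -- geometric comparison
  set q : ℝ := (3:ℝ) ^ ((1:ℝ)/2 - s) with hq
  have hq0 : 0 < q := Real.rpow_pos_of_pos h3R _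
  have hq1 : q < 1 := Real.rpow_lt_one_of_one_lt_of_neg (by norm_num) (by linarith)
  have hqk : ∀ k : ℕ, q ^ k = (3:ℝ) ^ (((1:ℝ)/2 - s) * k) := by
    intro k
    rw [← Real.rpow_natCast q k, hq, ← Real.rpow_mul (le_of_lt h3R)]
  -- summability of G
  have hGnn : ∀ k, 0 ≤ G k := fun k =>
    mul_nonneg (Nat.cast_nonneg _) (le_of_lt (Real.rpow_pos_of_pos h3R _))
  have hGle : ∀ k, G k ≤ 2 * q ^ k := by
    intro k
    rw [hqk]
    have h1 : (3:ℝ) ^ (-(k:ℝ) * s) ≤ (3:ℝ) ^ (((1:ℝ)/2 - s) * k) := by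
      apply Real.rpow_le_rpow_left_iff (by norm_num : (1:ℝ) < 3) |>.mpr
      have : (0:ℝ) ≤ k := Nat.cast_nonneg k
      nlinarith
    calc G k ≤ 2 * (3:ℝ) ^ (-(k:ℝ) * s) := by
          apply mul_le_mul_of_nonneg_right (hCle k) (le_of_lt (Real.rpow_pos_of_pos h3R _))
      _ ≤ 2 * (3:ℝ) ^ (((1:ℝ)/2 - s) * k) := by
          apply mul_le_mul_of_nonneg_left h1 (by norm_num)
  have hGsum : Summable G := by
    apply Summable.of_nonneg_of_le hGnn hGle
    exact (summable_geometric_of_lt_one (le_of_lt hq0) hq1).mul_left 2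
  -- summability of F
  have hFnn : ∀ k, 0 ≤ F k := fun k =>
    mul_nonneg (Nat.cast_nonneg _) (le_of_lt (Real.rpow_pos_of_pos h3R _))
  have hFle : ∀ k, F k ≤ (3 + 2 * 3 ^ t) * q ^ k := by
    intro k
    by_cases hk : k < r
    · have hCv : (C (3 ^ (k + 1)) (-((3 : ℤ) ^ r * n₀)) : ℝ) = 3 ^ ((k+1)/2) := by
        rw [hsmall k hk]; push_cast; ring
      have h1 : ((3:ℝ)) ^ ((k+1)/2) ≤ (3:ℝ) ^ (((k:ℝ)+1)/2) := by
        rw [← Real.rpow_natCast 3 ((k+1)/2)]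
        apply Real.rpow_le_rpow_left_iff (by norm_num : (1:ℝ) < 3) |>.mpr
        have : (((k+1)/2 : ℕ) : ℝ) ≤ ((k:ℝ)+1)/2 := by
          have h2 : ((k+1)/2 : ℕ) * 2 ≤ k + 1 := by omega
          have h3 : (((k+1)/2 : ℕ) : ℝ) * 2 ≤ (k:ℝ) + 1 := by exact_mod_cast h2
          linarith
        exact this
      have h2 : (3:ℝ) ^ (((k:ℝ)+1)/2) * (3:ℝ) ^ (-(k:ℝ) * s) = (3:ℝ) ^ ((1:ℝ)/2) * q ^ k := by
        rw [hqk, ← Real.rpow_add h3R, ← Real.rpow_add h3R]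
        congr 1
        ring
      calc F k = (3:ℝ) ^ ((k+1)/2) * (3:ℝ) ^ (-(k:ℝ) * s) := by rw [hF]; simp only; rw [hCv]
        _ ≤ (3:ℝ) ^ (((k:ℝ)+1)/2) * (3:ℝ) ^ (-(k:ℝ) * s) :=
            mul_le_mul_of_nonneg_right h1 (le_of_lt (Real.rpow_pos_of_pos h3R _))
        _ = (3:ℝ) ^ ((1:ℝ)/2) * q ^ k := h2
        _ ≤ 3 * q ^ k := by
            apply mul_le_mul_of_nonneg_right ?_ (le_of_lt (pow_pos hq0 k))
            calc (3:ℝ) ^ ((1:ℝ)/2) ≤ (3:ℝ) ^ (1:ℝ) :=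
                  Real.rpow_le_rpow_of_exponent_le (by norm_num) (by norm_num)
              _ = 3 := Real.rpow_one 3
        _ ≤ (3 + 2 * 3 ^ t) * q ^ k := by
            apply mul_le_mul_of_nonneg_right ?_ (le_of_lt (pow_pos hq0 k))
            have : (0:ℝ) ≤ 2 * 3 ^ t := by positivity
            linarith
    · push_neg at hk
      obtain ⟨i, hi⟩ : ∃ i, k = i + r := ⟨k - r, by omega⟩
      have hCv : (C (3 ^ (k + 1)) (-((3 : ℤ) ^ r * n₀)) : ℝ) =
          3 ^ t * (C (3 ^ (i+1)) (-(n₀:ℤ)) : ℝ) := by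
        rw [hi, hbig i]; push_cast; ring
      have h1 : (3:ℝ) ^ (-(k:ℝ) * s) ≤ q ^ k := by
        rw [hqk]
        apply Real.rpow_le_rpow_left_iff (by norm_num : (1:ℝ) < 3) |>.mpr
        have : (0:ℝ) ≤ k := Nat.cast_nonneg k
        nlinarith
      calc F k = 3 ^ t * (C (3 ^ (i+1)) (-(n₀:ℤ)) : ℝ) * (3:ℝ) ^ (-(k:ℝ) * s) := by
            rw [hF]; simp only; rw [hCv]
        _ ≤ 3 ^ t * 2 * (3:ℝ) ^ (-(k:ℝ) * s) := by
            apply mul_le_mul_of_nonneg_right ?_ (le_of_lt (Real.rpow_pos_of_pos h3R _))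
            apply mul_le_mul_of_nonneg_left (hCle i) (by positivity)
        _ ≤ 3 ^ t * 2 * q ^ k := by
            apply mul_le_mul_of_nonneg_left h1 (by positivity)
        _ ≤ (3 + 2 * 3 ^ t) * q ^ k := by
            apply mul_le_mul_of_nonneg_right ?_ (le_of_lt (pow_pos hq0 k))
            linarith
  have hFsum : Summable F := by
    apply Summable.of_nonneg_of_le hFnn hFle
    exact (summable_geometric_of_lt_one (le_of_lt hq0) hq1).mul_left _
  -- split the sum
  rw [show (∑' k : ℕ, (C (3 ^ (k + 1)) (-((3 : ℤ) ^ r * n₀)) : ℝ) * (3 : ℝ) ^ (-(k : ℝ) * s))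
      = ∑' k, F k from rfl, ← hFsum.sum_add_tsum_nat_add r]
  -- tail
  have htail : ∑' i : ℕ, F (i + r) =
      (3 : ℝ) ^ ((r : ℝ) / 2 - (r : ℝ) * s) * ∑' k, G k := by
    rw [← tsum_mul_left]
    apply tsum_congr
    intro i
    have hCv : (C (3 ^ ((i + r) + 1)) (-((3 : ℤ) ^ r * n₀)) : ℝ) =
        3 ^ t * (C (3 ^ (i+1)) (-(n₀:ℤ)) : ℝ) := by rw [hbig i]; push_cast; ring
    show (C (3 ^ ((i + r) + 1)) (-((3 : ℤ) ^ r * n₀)) : ℝ) * (3 : ℝ) ^ (-((i + r : ℕ) : ℝ) * s)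
        = _
    rw [hCv]
    have hpow : (3:ℝ) ^ t * (3 : ℝ) ^ (-((i + r : ℕ) : ℝ) * s)
        = (3 : ℝ) ^ ((r : ℝ) / 2 - (r : ℝ) * s) * (3 : ℝ) ^ (-(i : ℝ) * s) := by
      rw [← Real.rpow_natCast 3 t, ← Real.rpow_add h3R, ← Real.rpow_add h3R]
      congr 1
      push_cast [ht2]
      ring
    show 3 ^ t * (C (3 ^ (i+1)) (-(n₀:ℤ)) : ℝ) * (3 : ℝ) ^ (-((i + r : ℕ) : ℝ) * s) = _
    rw [hG]
    simp only
    calc 3 ^ t * (C (3 ^ (i+1)) (-(n₀:ℤ)) : ℝ) * (3 : ℝ) ^ (-((i + r : ℕ) : ℝ) * s)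
        = (C (3 ^ (i+1)) (-(n₀:ℤ)) : ℝ) * ((3:ℝ) ^ t * (3 : ℝ) ^ (-((i + r : ℕ) : ℝ) * s)) := by
          ring
      _ = (C (3 ^ (i+1)) (-(n₀:ℤ)) : ℝ) *
          ((3 : ℝ) ^ ((r : ℝ) / 2 - (r : ℝ) * s) * (3 : ℝ) ^ (-(i : ℝ) * s)) := by rw [hpow]
      _ = (3 : ℝ) ^ ((r : ℝ) / 2 - (r : ℝ) * s) *
          ((C (3 ^ (i+1)) (-(n₀:ℤ)) : ℝ) * (3 : ℝ) ^ (-(i : ℝ) * s)) := by ring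
  -- head
  have hhead : ∑ k ∈ Finset.range r, F k =
      (1 + (3 : ℝ) ^ (1 - s)) *
        ((1 - (3 : ℝ) ^ ((1 - 2 * s) * (r : ℝ) / 2)) / (1 - (3 : ℝ) ^ (1 - 2 * s))) := by
    have h1 : ∑ k ∈ Finset.range r, F k =
        ∑ k ∈ Finset.range (2 * t), ((3:ℝ) ^ ((k+1)/2) * (3:ℝ) ^ (-(k:ℝ) * s)) := by
      rw [← ht2]
      apply Finset.sum_congr rfl
      intro k hk
      rw [hF]
      simp only
      rw [hsmall k (Finset.mem_range.mp hk)]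
      push_cast
      ring
    rw [h1, finite_sum_lemma s t]
    set x : ℝ := (3:ℝ) ^ (1 - 2*s) with hxdef
    have hx1 : x < 1 := Real.rpow_lt_one_of_one_lt_of_neg (by norm_num) (by linarith)
    have hxne : x ≠ 1 := ne_of_lt hx1
    rw [geom_sum_eq hxne]
    have hxt : x ^ t = (3 : ℝ) ^ ((1 - 2 * s) * (r : ℝ) / 2) := by
      rw [← Real.rpow_natCast x t, hxdef, ← Real.rpow_mul (le_of_lt h3R)]
      congr 1
      rw [hrR]
      ring
    rw [hxt]
    congr 1
    have hd1 : x - 1 ≠ 0 := sub_ne_zero.mpr hxne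
    have hd2 : (1:ℝ) - x ≠ 0 := sub_ne_zero.mpr (ne_of_gt (by linarith))
    rw [div_eq_div_iff hd1 hd2]
    ring
  rw [hhead, htail]
end

section
/- Let ψ be a primitive Dirichlet character modulo n (with complex values), let b be a positive integer, and let w be a complex number with Re(w) > 1. Define L_b(w, ψ) = Σ_{d ≥ 1, d squarefree, gcd(d, b) = 1} ψ(d) · d^{−w} and L(w, ψ) = Σ_{d ≥ 1} ψ(d) · d^{−w}. Then L_b(w, ψ) = (L(w, ψ) / L(2w, ψ²)) · ∏_{p prime, p ∣ b} (1 + ψ(p) · p^{−w})^{−1}, where ψ² denotes the square of the character ψ. -/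
open Complex LSeries Nat

theorem stmt_18 (n : ℕ) (ψ : DirichletCharacter ℂ n) (hψ : ψ.conductor = n)
    (b : ℕ) (hb : 0 < b) (w : ℂ) (hw : 1 < w.re) :
    LSeries (fun d : ℕ => if Squarefree d ∧ Nat.Coprime d b then ψ (d : ZMod n) else 0) w =
      LSeries (fun d : ℕ => ψ (d : ZMod n)) w /
        LSeries (fun d : ℕ => (ψ ^ 2) (d : ZMod n)) (2 * w) *
      ∏ p ∈ b.primeFactors, (1 + ψ (p : ZMod n) * (p : ℂ) ^ (-w))⁻¹ := by
  classical
  set x : Nat.Primes → ℂ := fun p => ψ ((p : ℕ) : ZMod n) * ((p : ℕ) : ℂ) ^ (-w) with hxdef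
  -- norm bound on Euler factors
  have hxnorm : ∀ p : Nat.Primes, ‖x p‖ < 1 := by
    intro p
    have h2 : (2 : ℕ) ≤ (p : ℕ) := p.2.two_le
    have hpos : 0 < (p : ℕ) := by omega
    have h1 : ‖((p : ℕ) : ℂ) ^ (-w)‖ = ((p : ℕ) : ℝ) ^ (-w).re :=
      norm_natCast_cpow_of_pos hpos _
    have h2' : ((p : ℕ) : ℝ) ^ (-w).re < 1 := by
      apply Real.rpow_lt_one_of_one_lt_of_neg
      · exact_mod_cast by omega
      · simp only [neg_re]; linarith
    calc ‖x p‖ ≤ 1 * ‖((p : ℕ) : ℂ) ^ (-w)‖ := by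
          rw [hxdef, norm_mul]
          gcongr
          exact ψ.norm_le_one _
      _ < 1 := by rw [one_mul, h1]; exact h2'
  have hx1 : ∀ p : Nat.Primes, (1 : ℂ) - x p ≠ 0 := fun p => by
    rw [sub_ne_zero]
    intro h
    have := hxnorm p
    rw [← h] at this; simp at this
  have hx2 : ∀ p : Nat.Primes, (1 : ℂ) + x p ≠ 0 := fun p => by
    intro h
    have hx : x p = -1 := by linear_combination h
    have := hxnorm p
    rw [hx] at this; simp at this
  -- Euler products for the two L-series on the right
  have hLψ : HasProd (fun p : Nat.Primes => (1 - x p)⁻¹)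
      (LSeries (fun d : ℕ => ψ (d : ZMod n)) w) :=
    DirichletCharacter.LSeries_eulerProduct_hasProd ψ hw
  have h2w : 1 < (2 * w).re := by
    rw [show ((2 : ℂ) * w).re = 2 * w.re by simp]; linarith
  have hLψ2 : HasProd (fun p : Nat.Primes => (1 - (x p) ^ 2)⁻¹)
      (LSeries (fun d : ℕ => (ψ ^ 2) (d : ZMod n)) (2 * w)) := by
    have h := DirichletCharacter.LSeries_eulerProduct_hasProd (ψ ^ 2) h2w
    convert h using 2 with p
    have hp0 : ((p : ℕ) : ℂ) ≠ 0 := by exact_mod_cast p.2.ne_zero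
    rw [hxdef]
    simp only [pow_two, MulChar.mul_apply]
    rw [show -(2 * w) = -w + -w by ring, cpow_add _ _ hp0]
    ring
  -- Euler product for the left-hand series
  set f : ℕ → ℂ := fun d => if Squarefree d ∧ Nat.Coprime d b then ψ (d : ZMod n) else 0 with hfdef
  set F : ℕ → ℂ := LSeries.term f w with hFdef
  have hF0 : F 0 = 0 := LSeries.term_zero f w
  have hF1 : F 1 = 1 := by
    rw [hFdef, LSeries.term_of_ne_zero one_ne_zero, hfdef]
    simp [squarefree_one, Nat.coprime_one_left]
  have hFmul : ∀ {m k : ℕ}, Nat.Coprime m k → F (m * k) = F m * F k := by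
    intro m k hmk
    rcases eq_or_ne m 0 with rfl | hm
    · have : k = 1 := by simpa using hmk
      subst this; simp [hF0, hF1]
    rcases eq_or_ne k 0 with rfl | hk
    · have : m = 1 := by simpa [Nat.coprime_zero_right] using hmk
      subst this; simp [hF0, hF1]
    have hmk0 : m * k ≠ 0 := by positivity
    rw [hFdef, LSeries.term_of_ne_zero hmk0, LSeries.term_of_ne_zero hm,
      LSeries.term_of_ne_zero hk, hfdef]
    simp only
    have hsq : Squarefree (m * k) ↔ Squarefree m ∧ Squarefree k :=
      Nat.squarefree_mul hmk
    have hcop : Nat.Coprime (m * k) b ↔ Nat.Coprime m b ∧ Nat.Coprime k b :=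
      Nat.coprime_mul_iff_left
    by_cases H : (Squarefree m ∧ Nat.Coprime m b) ∧ (Squarefree k ∧ Nat.Coprime k b)
    · rw [if_pos ⟨hsq.mpr ⟨H.1.1, H.2.1⟩, hcop.mpr ⟨H.1.2, H.2.2⟩⟩, if_pos H.1, if_pos H.2]
      push_cast
      rw [map_mul, natCast_mul_natCast_cpow]
      ring
    · have : ¬ (Squarefree (m * k) ∧ Nat.Coprime (m * k) b) := by
        rw [hsq, hcop]; tauto
      rw [if_neg this]
      rcases not_and_or.mp H with h | h
      · rw [if_neg h]; simp
      · rw [if_neg h]; simp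
  have hFsum : Summable fun d => ‖F d‖ := by
    apply Summable.of_nonneg_of_le (fun _ => norm_nonneg _)
      (fun d => LSeries.norm_term_le w (f := f) (g := fun d : ℕ => ψ (d : ZMod n)) ?_)
      ((LSeriesSummable_iff_of_re_eq_re (f := fun d : ℕ => ψ (d : ZMod n)) rfl).mp
        (DirichletCharacter.LSeriesSummable_of_one_lt_re ψ hw)).norm
    · rw [hfdef]; dsimp only
      split <;> simp
  have hA : HasProd (fun p : Nat.Primes => ∑' e : ℕ, F ((p : ℕ) ^ e))
      (LSeries f w) :=
    EulerProduct.eulerProduct_hasProd hF1 (fun hmk => hFmul hmk) hFsum hF0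
  -- compute the local factors of the left-hand series
  have htsum : ∀ p : Nat.Primes,
      (∑' e : ℕ, F ((p : ℕ) ^ e)) = if (p : ℕ) ∣ b then 1 else 1 + x p := by
    intro p
    have hvan : ∀ e : ℕ, e ∉ ({0, 1} : Finset ℕ) → F ((p : ℕ) ^ e) = 0 := by
      intro e he
      have he2 : 2 ≤ e := by simp only [Finset.mem_insert, Finset.mem_singleton] at he; omega
      have hnsq : ¬ Squarefree ((p : ℕ) ^ e) := by
        intro hs
        have : ((p : ℕ)) * (p : ℕ) ∣ (p : ℕ) ^ e := by
          rw [← pow_two]; exact pow_dvd_pow _ he2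
        have := hs _ this
        exact p.2.one_lt.ne' (Nat.isUnit_iff.mp this)
      rw [hFdef, LSeries.term_of_ne_zero (pow_ne_zero e p.2.ne_zero), hfdef]
      simp [hnsq]
    rw [tsum_eq_sum hvan]
    have hFp : F ((p : ℕ) ^ 1) = if (p : ℕ) ∣ b then 0 else x p := by
      rw [pow_one, hFdef, LSeries.term_of_ne_zero p.2.ne_zero, hfdef]
      simp only [p.2.prime.squarefree, true_and, Nat.Prime.coprime_iff_not_dvd p.2]
      split_ifs with h
      · simp [h]
      · simp only [hxdef]
        rw [cpow_neg, div_eq_mul_inv]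
    rw [Finset.sum_insert (by simp), Finset.sum_singleton, pow_zero, hF1, hFp]
    split_ifs <;> ring
  rw [funext htsum] at hA
  -- the finite correction product
  set P : ℂ := ∏ p ∈ b.primeFactors, (1 + ψ (p : ZMod n) * (p : ℂ) ^ (-w)) with hPdef
  set s : Finset Nat.Primes := b.primeFactors.attach.map
    ⟨fun q => ⟨q.1, Nat.prime_of_mem_primeFactors q.2⟩,
      by
        intro a c h
        rcases a with ⟨a, ha⟩; rcases c with ⟨c, hc⟩
        apply Subtype.ext; injection h⟩ with hsdef
  have hmem : ∀ q : Nat.Primes, q ∈ s ↔ (q : ℕ) ∣ b := by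
    intro q
    rw [hsdef]
    simp only [Finset.mem_map, Finset.mem_attach, Function.Embedding.coeFn_mk, true_and]
    constructor
    · rintro ⟨a, ha⟩
      have : (a : ℕ) = (q : ℕ) := congrArg Subtype.val ha
      exact this ▸ (Nat.mem_primeFactors.mp a.2).2.1
    · intro hdvd
      exact ⟨⟨(q : ℕ), Nat.mem_primeFactors.mpr ⟨q.2, hdvd, hb.ne'⟩⟩, rfl⟩
  have hfin : HasProd (fun p : Nat.Primes => if (p : ℕ) ∣ b then 1 + x p else 1) P := by
    have h := hasProd_prod_of_ne_finset_one
      (f := fun p : Nat.Primes => if (p : ℕ) ∣ b then 1 + x p else 1) (s := s)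
      (L := SummationFilter.unconditional _)
      (fun q hq => if_neg (fun hdvd => hq ((hmem q).mpr hdvd)))
    convert h using 1
    rw [hPdef, hsdef, Finset.prod_map]
    rw [← Finset.prod_attach b.primeFactors
      (fun p => (1 + ψ (p : ZMod n) * (p : ℂ) ^ (-w)))]
    refine Finset.prod_congr rfl fun q _ => ?_
    have hdvd : (q : ℕ) ∣ b := (Nat.mem_primeFactors.mp q.2).2.1
    simp only [Function.Embedding.coeFn_mk, if_pos hdvd, hxdef]
    exact (if_pos hdvd).symm
  -- combine
  have hB : HasProd (fun p : Nat.Primes => 1 + x p) (LSeries f w * P) := by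
    have h := hA.mul hfin
    convert h using 1
    funext p
    split_ifs <;> ring
  have hC : HasProd (fun p : Nat.Primes => (1 - x p)⁻¹)
      (LSeries (fun d : ℕ => (ψ ^ 2) (d : ZMod n)) (2 * w) * (LSeries f w * P)) := by
    have h := hLψ2.mul hB
    convert h using 1
    funext p
    rw [show (1 : ℂ) - (x p) ^ 2 = (1 - x p) * (1 + x p) by ring, mul_inv, mul_assoc,
      inv_mul_cancel₀ (hx2 p), mul_one]
  have heq := hLψ.unique hC
  have hL2 : LSeries (fun d : ℕ => (ψ ^ 2) (d : ZMod n)) (2 * w) ≠ 0 :=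
    DirichletCharacter.LSeries_ne_zero_of_one_lt_re (ψ ^ 2) h2w
  have hP : P ≠ 0 := by
    rw [hPdef]
    refine Finset.prod_ne_zero_iff.mpr fun p hp => ?_
    exact hx2 ⟨p, Nat.prime_of_mem_primeFactors hp⟩
  rw [Finset.prod_inv_distrib, ← hPdef, heq]
  field_simp
end
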